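/- arXiv:math/0406401 — 4 statements merged into one kernel-verified Lean document; each statement's English description precedes it below -/
import Mathlib

section
/- For all integers r ≥ 1 and q ≥ 3, the constants κ_{r,q} := K(r,0,q)/r! satisfy |κ_{r,q} - (-1)^r ζ(q)(ζ(r+1) - 1)| ≤ (ζ(q-1) - ζ(q)) / 2^{r+1}. -/
open MeasureTheory

/-- Polylogarithm `Li n x = ∑_{k ≥ 1} x^k / k^n` (for an integer index `n`). -/
noncomputable def Li (n : ℤ) (x : ℝ) : ℝ := ∑' k : ℕ+, x ^ (k : ℕ) / ((k : ℕ) : ℝ) ^ n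

/-- Zeta value `ζ(n) = ∑_{k ≥ 1} 1 / k^n` (equals `0` at `n = 1` by divergence). -/
noncomputable def zetaR (n : ℕ) : ℝ := ∑' k : ℕ+, 1 / ((k : ℕ) : ℝ) ^ n

/-- The set of zeta values at integers `n ≥ 2`. -/
def zetaValues : Set ℝ := {x : ℝ | ∃ n : ℕ, 2 ≤ n ∧ x = zetaR n}

open Set Real

lemma img_exp_neg : (fun t : ℝ => Real.exp (-t)) '' Set.Ioi 0 = Set.Ioo 0 1 := by
  ext x
  simp only [mem_image, mem_Ioi, mem_Ioo]
  constructor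
  · rintro ⟨t, ht, rfl⟩
    exact ⟨exp_pos _, by rw [exp_lt_one_iff]; linarith⟩
  · rintro ⟨hx0, hx1⟩
    exact ⟨-Real.log x, by simpa using Real.log_neg hx0 hx1, by rw [neg_neg, Real.exp_log hx0]⟩

lemma hderiv : ∀ t ∈ Set.Ioi (0:ℝ), HasDerivWithinAt (fun t : ℝ => Real.exp (-t))
    (-Real.exp (-t)) (Set.Ioi 0) t := by
  intro t _
  have h : HasDerivAt (fun t : ℝ => Real.exp (-t)) (Real.exp (-t) * (-1)) t :=
    (Real.hasDerivAt_exp (-t)).comp t ((hasDerivAt_id t).neg)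
  simpa using h.hasDerivWithinAt

lemma injexp : Set.InjOn (fun t : ℝ => Real.exp (-t)) (Set.Ioi 0) :=
  (Real.exp_injective.comp neg_injective).injOn

lemma gamma_int (r n : ℕ) :
    ∫ t in Set.Ioi (0:ℝ), t ^ r * Real.exp (-(((n:ℝ)+1) * t))
      = (r.factorial : ℝ) / ((n:ℝ)+1) ^ (r+1) := by
  have h := Real.integral_rpow_mul_exp_neg_mul_Ioi (a := (r:ℝ)+1) (r := (n:ℝ)+1)
    (by positivity) (by positivity)
  rw [show ((r:ℝ)+1) - 1 = (r:ℝ) by ring] at h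
  simp_rw [Real.rpow_natCast] at h
  rw [h, Real.Gamma_nat_eq_factorial, show ((r:ℝ)+1) = ((r+1 : ℕ):ℝ) by push_cast; ring,
    Real.rpow_natCast, div_pow, one_pow]
  ring

lemma gamma_integrable (r n : ℕ) :
    IntegrableOn (fun t : ℝ => t ^ r * Real.exp (-(((n:ℝ)+1) * t))) (Set.Ioi 0) := by
  have h := integrableOn_rpow_mul_exp_neg_mul_rpow (p := 1) (s := (r:ℝ)) (b := (n:ℝ)+1)
    (neg_one_lt_zero.trans_le (Nat.cast_nonneg r)) zero_lt_one (by positivity)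
  refine h.congr_fun (fun t ht => ?_) measurableSet_Ioi
  beta_reduce
  rw [Real.rpow_one, Real.rpow_natCast, neg_mul]

lemma int_log_pow (r n : ℕ) :
    ∫ x in Set.Ioo (0:ℝ) 1, Real.log x ^ r * x ^ n
      = (-1:ℝ)^r * (r.factorial : ℝ) / ((n:ℝ)+1) ^ (r+1) := by
  rw [← img_exp_neg, integral_image_eq_integral_abs_deriv_smul measurableSet_Ioi hderiv injexp]
  have : ∀ t ∈ Set.Ioi (0:ℝ), |(-Real.exp (-t))| • (Real.log (Real.exp (-t)) ^ r * Real.exp (-t) ^ n)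
      = (-1:ℝ)^r * (t ^ r * Real.exp (-(((n:ℝ)+1) * t))) := by
    intro t _
    rw [abs_neg, abs_of_pos (Real.exp_pos _), Real.log_exp, smul_eq_mul, ← Real.exp_nat_mul,
      neg_pow, show -(((n:ℝ)+1)*t) = -t + (n:ℝ)*(-t) by ring, Real.exp_add]
    ring
  rw [setIntegral_congr_fun measurableSet_Ioi this, integral_const_mul, gamma_int]
  ring

lemma integrableOn_log_pow (r n : ℕ) :
    IntegrableOn (fun x : ℝ => Real.log x ^ r * x ^ n) (Set.Ioo 0 1) := by
  rw [← img_exp_neg, integrableOn_image_iff_integrableOn_abs_deriv_smul measurableSet_Ioi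
    hderiv injexp]
  have : ∀ t ∈ Set.Ioi (0:ℝ), |(-Real.exp (-t))| • (Real.log (Real.exp (-t)) ^ r * Real.exp (-t) ^ n)
      = (-1:ℝ)^r * (t ^ r * Real.exp (-(((n:ℝ)+1) * t))) := by
    intro t _
    rw [abs_neg, abs_of_pos (Real.exp_pos _), Real.log_exp, smul_eq_mul, ← Real.exp_nat_mul,
      neg_pow, show -(((n:ℝ)+1)*t) = -t + (n:ℝ)*(-t) by ring, Real.exp_add]
    ring
  exact (IntegrableOn.congr_fun ((gamma_integrable r n).const_mul _)
    (fun t ht => (this t ht).symm) measurableSet_Ioi)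




def eN : ℕ ≃ ℕ+ where
  toFun n := n.succPNat
  invFun k := (k : ℕ) - 1
  left_inv n := by simp [Nat.succPNat]
  right_inv k := by
    have := k.pos
    apply PNat.coe_injective
    simp [Nat.succPNat, Nat.sub_add_cancel this]

lemma tsum_pnat (f : ℕ+ → ℝ) : ∑' k : ℕ+, f k = ∑' n : ℕ, f n.succPNat :=
  (eN.tsum_eq f).symm

lemma zetaR_eq (n : ℕ) : zetaR n = ∑' k : ℕ, 1 / ((k:ℝ)+1) ^ n := by
  rw [zetaR, tsum_pnat]; congr 1 with k; simp [Nat.succPNat]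

lemma Li_eq (n : ℕ) (x : ℝ) : Li n x = ∑' k : ℕ, x ^ (k+1) / ((k:ℝ)+1) ^ n := by
  rw [Li, tsum_pnat]
  congr 1 with k
  rw [zpow_natCast]
  simp [Nat.succPNat]

lemma summable_zeta {n : ℕ} (hn : 2 ≤ n) : Summable (fun k : ℕ => 1 / ((k:ℝ)+1) ^ n) := by
  have h : Summable (fun k : ℕ => 1 / (k:ℝ) ^ n) := by
    rw [Real.summable_one_div_nat_pow]; exact hn
  exact (summable_nat_add_iff 1).mpr (by exact_mod_cast h) |>.congr (fun k => by push_cast; ring_nf)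

section main
variable {r q : ℕ} (hr : 1 ≤ r) (hq : 3 ≤ q)

/-- the tail zeta terms -/
noncomputable def fz (r : ℕ) (j : ℕ) : ℝ := 1 / ((j:ℝ)+2) ^ (r+1)

lemma summable_fz (hr : 1 ≤ r) : Summable (fz r) := by
  have := (summable_nat_add_iff 1).mpr (summable_zeta (n := r+1) (by omega))
  exact this.congr (fun j => by simp [fz]; norm_num; ring_nf)

lemma fz_nonneg (j : ℕ) : 0 ≤ fz r j := by simp only [fz]; positivity

lemma fz_le (j : ℕ) : fz r j ≤ 1 / 2 ^ (r+1) := by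
  apply div_le_div_of_nonneg_left one_pos.le (by positivity)
  apply pow_le_pow_left₀ (by norm_num)
  linarith [Nat.cast_nonneg (α := ℝ) j]

lemma tsum_fz (hr : 1 ≤ r) : ∑' j, fz r j = zetaR (r+1) - 1 := by
  rw [zetaR_eq, Summable.tsum_eq_zero_add (summable_zeta (n := r+1) (by omega))]
  push_cast
  have h : ∀ j : ℕ, (1:ℝ) / ((j:ℝ)+1+1) ^ (r+1) = fz r j := by
    intro j; rw [fz]; ring_nf
  simp only [h]
  norm_num

lemma tail_fz (hr : 1 ≤ r) (k : ℕ) :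
    ∑' j, fz r (k + j) = (∑' j, fz r j) - ∑ i ∈ Finset.range k, fz r i := by
  have h := Summable.sum_add_tsum_nat_add (f := fz r) k (summable_fz hr)
  have h2 : ∑' j, fz r (k + j) = ∑' j, fz r (j + k) := by
    congr 1 with j; rw [add_comm]
  rw [h2, ← h]; ring

end main

section big
variable (r q : ℕ)

noncomputable def gS (p : ℕ × ℕ) : ℝ := (1/((p.1:ℝ)+1)^q) * fz r (p.1+p.2)

lemma gS_nonneg (p : ℕ × ℕ) : 0 ≤ gS r q p :=
  mul_nonneg (by positivity) (fz_nonneg _)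

lemma fz_le' (hr : 1 ≤ r) (k j : ℕ) : fz r (k + j) ≤ fz 1 j := by
  simp only [fz]
  apply div_le_div_of_nonneg_left one_pos.le (by positivity)
  calc ((j:ℝ)+2)^(1+1) ≤ ((k:ℝ)+(j:ℝ)+2)^(1+1) := by
        apply pow_le_pow_left₀ (by positivity); linarith [Nat.cast_nonneg (α := ℝ) k]
    _ ≤ ((k:ℝ)+(j:ℝ)+2)^(r+1) := by
        apply pow_le_pow_right₀ (by linarith [Nat.cast_nonneg (α := ℝ) k, Nat.cast_nonneg (α := ℝ) j])
        omega
    _ = (((k+j:ℕ):ℝ)+2)^(r+1) := by push_cast; ring_nf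

lemma summable_gS (hr : 1 ≤ r) (hq : 3 ≤ q) : Summable (gS r q) := by
  apply Summable.of_nonneg_of_le (gS_nonneg r q) (fun p => ?_)
    ((summable_zeta (n := q) (by omega)).mul_of_nonneg (summable_fz le_rfl)
      (fun k => by positivity) fz_nonneg)
  exact mul_le_mul_of_nonneg_left (fz_le' r hr p.1 p.2) (by positivity)

lemma tail_fz_le (hr : 1 ≤ r) (k : ℕ) : ∑' j, fz r (k + j) ≤ ∑' j, fz r j := by
  rw [tail_fz hr k]
  have : 0 ≤ ∑ i ∈ Finset.range k, fz r i := Finset.sum_nonneg (fun i _ => fz_nonneg i)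
  linarith

lemma tail_fz_nonneg (k : ℕ) : 0 ≤ ∑' j, fz r (k + j) :=
  tsum_nonneg (fun j => fz_nonneg _)

lemma hSsum (hr : 1 ≤ r) (hq : 3 ≤ q) :
    Summable (fun k : ℕ => (1/((k:ℝ)+1)^q) * ∑' j, fz r (k+j)) := by
  apply Summable.of_nonneg_of_le
    (fun k => mul_nonneg (by positivity) (tail_fz_nonneg r k))
    (fun k => mul_le_mul_of_nonneg_left (tail_fz_le r hr k) (by positivity))
    ((summable_zeta (n := q) (by omega)).mul_right _)

lemma c_sub_S (hr : 1 ≤ r) (hq : 3 ≤ q) :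
    zetaR q * (zetaR (r+1) - 1) - (∑' p : ℕ × ℕ, gS r q p)
      = ∑' k : ℕ, (1/((k:ℝ)+1)^q) * ∑ i ∈ Finset.range k, fz r i := by
  rw [Summable.tsum_prod (summable_gS r q hr hq)]
  have hin : ∀ k : ℕ, ∑' j, gS r q (k, j) = (1/((k:ℝ)+1)^q) * ∑' j, fz r (k+j) := by
    intro k; simp only [gS]; exact tsum_mul_left
  simp only [hin]
  rw [zetaR_eq, ← tsum_fz hr, ← tsum_mul_right,
    ← Summable.tsum_sub ((summable_zeta (n := q) (by omega)).mul_right _) (hSsum r q hr hq)]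
  congr 1 with k
  rw [← mul_sub, tail_fz hr k]
  ring

lemma D_summable (hr : 1 ≤ r) (hq : 3 ≤ q) :
    Summable (fun k : ℕ => (1/((k:ℝ)+1)^q) * ∑ i ∈ Finset.range k, fz r i) := by
  apply Summable.of_nonneg_of_le
    (fun k => mul_nonneg (by positivity) (Finset.sum_nonneg (fun i _ => fz_nonneg i)))
    (fun k => mul_le_mul_of_nonneg_left ?_ (by positivity))
    ((summable_zeta (n := q) (by omega)).mul_right (∑' j, fz r j))
  exact Summable.sum_le_tsum (Finset.range k) (fun i _ => fz_nonneg i) (summable_fz hr)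

lemma D_le (hr : 1 ≤ r) (hq : 3 ≤ q) :
    ∑' k : ℕ, (1/((k:ℝ)+1)^q) * ∑ i ∈ Finset.range k, fz r i
      ≤ (zetaR (q-1) - zetaR q) / 2 ^ (r+1) := by
  obtain ⟨m, rfl⟩ : ∃ m, q = m + 1 := ⟨q - 1, by omega⟩
  have hm : 2 ≤ m := by omega
  have hterm : ∀ k : ℕ, (1/((k:ℝ)+1)^(m+1)) * ∑ i ∈ Finset.range k, fz r i
      ≤ (1/((k:ℝ)+1)^m - 1/((k:ℝ)+1)^(m+1)) / 2 ^ (r+1) := by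
    intro k
    have h1 : ∑ i ∈ Finset.range k, fz r i ≤ (k:ℝ) * (1/2^(r+1)) := by
      have := Finset.sum_le_card_nsmul (Finset.range k) (fz r) (1/2^(r+1))
        (fun i _ => fz_le (r := r) i)
      simpa [nsmul_eq_mul] using this
    have h2 : (1:ℝ)/((k:ℝ)+1)^m - 1/((k:ℝ)+1)^(m+1) = (k:ℝ)/((k:ℝ)+1)^(m+1) := by
      have hpos : (0:ℝ) < (k:ℝ)+1 := by positivity
      field_simp
      ring
    rw [h2]
    calc (1/((k:ℝ)+1)^(m+1)) * ∑ i ∈ Finset.range k, fz r i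
        ≤ (1/((k:ℝ)+1)^(m+1)) * ((k:ℝ) * (1/2^(r+1))) :=
          mul_le_mul_of_nonneg_left h1 (by positivity)
      _ = ((k:ℝ)/((k:ℝ)+1)^(m+1)) / 2^(r+1) := by ring
  have hB : Summable (fun k : ℕ => (1/((k:ℝ)+1)^m - 1/((k:ℝ)+1)^(m+1)) / 2 ^ (r+1)) :=
    ((summable_zeta hm).sub (summable_zeta (by omega))).div_const _
  refine le_trans (Summable.tsum_le_tsum hterm (D_summable r (m+1) hr hq) hB) ?_
  rw [tsum_div_const, Summable.tsum_sub (summable_zeta hm) (summable_zeta (by omega))]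
  rw [show m + 1 - 1 = m from rfl, zetaR_eq, zetaR_eq]

noncomputable def FF (p : ℕ × ℕ) (x : ℝ) : ℝ :=
  Real.log x ^ r * (x^(p.1+1)/((p.1:ℝ)+1)^q) * x^p.2

lemma FF_integrable (p : ℕ × ℕ) : IntegrableOn (FF r q p) (Set.Ioo 0 1) := by
  apply IntegrableOn.congr_fun
    ((integrableOn_log_pow r (p.1+1+p.2)).const_mul (1/((p.1:ℝ)+1)^q))
    (fun x _ => ?_) measurableSet_Ioo
  simp only [FF]
  rw [pow_add, pow_add]
  ring

lemma FF_integral (p : ℕ × ℕ) :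
    ∫ x in Set.Ioo (0:ℝ) 1, FF r q p x = (-1)^r * (r.factorial : ℝ) * gS r q p := by
  have heq : ∀ x ∈ Set.Ioo (0:ℝ) 1, FF r q p x
      = (1/((p.1:ℝ)+1)^q) * (Real.log x ^ r * x^(p.1+1+p.2)) := by
    intro x _
    simp only [FF]
    rw [pow_add, pow_add]
    ring
  rw [setIntegral_congr_fun measurableSet_Ioo heq, integral_const_mul, int_log_pow]
  simp only [gS, fz]
  push_cast
  ring

lemma FF_norm_integral (p : ℕ × ℕ) :
    ∫ x in Set.Ioo (0:ℝ) 1, ‖FF r q p x‖ = (r.factorial : ℝ) * gS r q p := by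
  have heq : ∀ x ∈ Set.Ioo (0:ℝ) 1, ‖FF r q p x‖
      = (1/((p.1:ℝ)+1)^q) * ((-1)^r * (Real.log x ^ r * x^(p.1+1+p.2))) := by
    intro x hx
    have hx0 := hx.1
    have hl : |Real.log x| = -Real.log x := abs_of_nonpos (Real.log_nonpos hx0.le hx.2.le)
    simp only [FF]
    rw [Real.norm_eq_abs, abs_mul, abs_mul, abs_pow, hl, abs_of_nonneg (by positivity :
      (0:ℝ) ≤ x^(p.1+1)/((p.1:ℝ)+1)^q), abs_of_nonneg (by positivity : (0:ℝ) ≤ x^p.2),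
      neg_pow, pow_add, pow_add]
    ring
  rw [setIntegral_congr_fun measurableSet_Ioo heq, integral_const_mul, integral_const_mul,
    int_log_pow]
  have hsq : ((-1:ℝ)^r) * ((-1:ℝ)^r) = 1 := by
    rw [← mul_pow]; norm_num
  simp only [gS, fz]
  push_cast
  field_simp
  ring_nf
  simp only [pow_mul', neg_one_sq, one_pow]
  ring

lemma FF_tsum {x : ℝ} (hx : x ∈ Set.Ioo (0:ℝ) 1) :
    ∑' p : ℕ × ℕ, FF r q p x = Real.log x ^ r * Li q x / (1 - x) := by
  obtain ⟨hx0, hx1⟩ := hx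
  have hgeo := summable_geometric_of_lt_one hx0.le hx1 (r := x)
  have hg : Summable (fun j : ℕ => ‖x ^ j‖) := by
    refine hgeo.congr (fun j => ?_)
    rw [Real.norm_eq_abs, abs_pow, abs_of_pos hx0]
  have hfs : Summable (fun k : ℕ => ‖Real.log x ^ r * (x^(k+1)/((k:ℝ)+1)^q)‖) := by
    apply Summable.of_nonneg_of_le (fun k => norm_nonneg _) (fun k => ?_)
      (hgeo.mul_left (|Real.log x ^ r| * x))
    rw [Real.norm_eq_abs, abs_mul, abs_of_nonneg (by positivity :
      (0:ℝ) ≤ x^(k+1)/((k:ℝ)+1)^q)]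
    rw [mul_assoc]
    apply mul_le_mul_of_nonneg_left ?_ (abs_nonneg _)
    calc x^(k+1)/((k:ℝ)+1)^q ≤ x^(k+1) := by
          apply div_le_self (by positivity)
          apply one_le_pow₀
          linarith [Nat.cast_nonneg (α := ℝ) k]
      _ = x * x^k := by rw [pow_succ']
  have h := tsum_mul_tsum_of_summable_norm hfs hg
  have hFF : ∀ p : ℕ × ℕ, FF r q p x
      = (fun k : ℕ => Real.log x ^ r * (x^(k+1)/((k:ℝ)+1)^q)) p.1 * (fun j : ℕ => x^j) p.2 := by
    intro p; rfl
  rw [tsum_congr hFF, ← h, tsum_mul_left, ← Li_eq, tsum_geometric_of_lt_one hx0.le hx1]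
  rw [div_eq_mul_inv]

lemma integral_eq (hr : 1 ≤ r) (hq : 3 ≤ q) :
    ∫ x in Set.Ioo (0:ℝ) 1, Real.log x ^ r * Li q x / (1-x)
      = (-1)^r * (r.factorial : ℝ) * ∑' p : ℕ × ℕ, gS r q p := by
  have hnorm : Summable (fun p : ℕ × ℕ => ∫ x in Set.Ioo (0:ℝ) 1, ‖FF r q p x‖) := by
    simp only [FF_norm_integral]
    exact (summable_gS r q hr hq).mul_left _
  have hswap := integral_tsum_of_summable_integral_norm (μ := volume.restrict (Set.Ioo 0 1))
    (fun p => FF_integrable r q p) hnorm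
  rw [← setIntegral_congr_fun measurableSet_Ioo (fun x hx => FF_tsum r q hx), ← hswap]
  rw [tsum_congr (FF_integral r q), tsum_mul_left]

end big


/-- For integers `r ≥ 1` and `q ≥ 3`, the constants
`κ_{r,q} = (∫₀¹ log^r(x) Li_q(x)/(1-x) dx) / r!` satisfy
`|κ_{r,q} - (-1)^r ζ(q)(ζ(r+1) - 1)| ≤ (ζ(q-1) - ζ(q)) / 2^(r+1)`. -/
theorem stmt3 (r q : ℕ) (hr : 1 ≤ r) (hq : 3 ≤ q) :
    |(∫ x in (0:ℝ)..1, Real.log x ^ r * Li q x / (1 - x)) / (r.factorial : ℝ)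
        - (-1) ^ r * zetaR q * (zetaR (r + 1) - 1)|
      ≤ (zetaR (q - 1) - zetaR q) / 2 ^ (r + 1) := by
  rw [intervalIntegral.integral_of_le zero_le_one, integral_Ioc_eq_integral_Ioo,
    integral_eq r q hr hq]
  set S := ∑' p : ℕ × ℕ, gS r q p with hS
  set c := zetaR q * (zetaR (r + 1) - 1) with hc
  have hfac : (r.factorial : ℝ) ≠ 0 := Nat.cast_ne_zero.mpr r.factorial_ne_zero
  have h1 : (-1:ℝ)^r * (r.factorial : ℝ) * S / (r.factorial : ℝ) = (-1)^r * S := by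
    field_simp
  have hDn : 0 ≤ ∑' k : ℕ, (1/((k:ℝ)+1)^q) * ∑ i ∈ Finset.range k, fz r i :=
    tsum_nonneg (fun k => mul_nonneg (by positivity)
      (Finset.sum_nonneg (fun i _ => fz_nonneg i)))
  have hkey := c_sub_S r q hr hq
  rw [← hc] at hkey
  have h2 : (-1:ℝ)^r * S - (-1)^r * zetaR q * (zetaR (r+1) - 1) = (-1)^r * (S - c) := by
    rw [hc]; ring
  rw [h1, h2, abs_mul, abs_pow, abs_neg, abs_one, one_pow, one_mul,
    abs_of_nonpos (by linarith), neg_sub, hkey]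
  exact D_le r q hr hq
end

section
/- For all integers p ≥ 1 and q ≥ 2, the nonlinear Euler sum S_{1^p,q} = Σ_{n=1}^∞ H_n^p / n^q equals (-1)^p times the integral over the open unit cube Q_p = (0,1)^p of Li_{q-p}(x₁⋯x_p) · ∏_{j=1}^p log(1-x_j) divided by x₁⋯x_p, with respect to Lebesgue measure on ℝ^p. -/
open MeasureTheory

open Filter

noncomputable def Hs (n : ℕ) : ℝ := ∑ k ∈ Finset.Icc 1 n, (1:ℝ)/(k:ℝ)

lemma hs_eq_range (n : ℕ) : Hs n = ∑ i ∈ Finset.range n, (1:ℝ)/((i:ℝ)+1) := by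
  rw [Hs, ← Finset.Ico_add_one_right_eq_Icc, Finset.sum_Ico_eq_sum_range]
  refine Finset.sum_congr rfl fun i _ => ?_
  push_cast
  rw [add_comm]

lemma integrableOn_log_Ioo : IntegrableOn Real.log (Set.Ioo (0:ℝ) 1) := by
  have hr : IntegrableOn (fun x : ℝ => x ^ (-(1/2) : ℝ)) (Set.Ioo (0:ℝ) 1) := by
    have := intervalIntegral.intervalIntegrable_rpow' (a := 0) (b := 1) (r := -(1/2))
      (by norm_num)
    rwa [intervalIntegrable_iff_integrableOn_Ioo_of_le (by norm_num)] at this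
  refine (hr.const_mul 2).mono Real.measurable_log.aestronglyMeasurable ?_
  rw [ae_restrict_iff' measurableSet_Ioo]
  refine Filter.Eventually.of_forall fun x hx => ?_
  obtain ⟨hx0, hx1⟩ := hx
  have hlt : Real.log x < 0 := Real.log_neg hx0 hx1
  have hp : (0:ℝ) < x ^ (-(1/2) : ℝ) := Real.rpow_pos_of_pos hx0 _
  have h1 : Real.log (x ^ (-(1/2):ℝ)) = -(1/2) * Real.log x := Real.log_rpow hx0 _
  have h2 : Real.log (x ^ (-(1/2):ℝ)) ≤ x ^ (-(1/2):ℝ) - 1 := Real.log_le_sub_one_of_pos hp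
  rw [Real.norm_eq_abs, Real.norm_eq_abs, abs_of_neg hlt, abs_of_pos (by positivity)]
  nlinarith

lemma integrableOn_log_one_sub : IntegrableOn (fun x : ℝ => Real.log (1 - x)) (Set.Ioo (0:ℝ) 1) := by
  have hmp : MeasurePreserving (fun x : ℝ => 1 - x) volume volume := by
    have h1 := (measurePreserving_add_left (volume : Measure ℝ) 1).comp
      (Measure.measurePreserving_neg (volume : Measure ℝ))
    simpa [Function.comp_def, sub_eq_add_neg] using h1
  have hemb : MeasurableEmbedding (fun x : ℝ => 1 - x) :=
    (Homeomorph.subLeft (1:ℝ)).measurableEmbedding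
  have h := (hmp.integrableOn_comp_preimage hemb (s := Set.Ioo (0:ℝ) 1)).2 integrableOn_log_Ioo
  have hpre : (fun x : ℝ => 1 - x) ⁻¹' Set.Ioo (0:ℝ) 1 = Set.Ioo (0:ℝ) 1 := by
    ext x
    simp only [Set.mem_preimage, Set.mem_Ioo]
    constructor <;> rintro ⟨a, b⟩ <;> constructor <;> linarith
  rwa [hpre] at h

lemma integrableOn_g (m : ℕ) :
    IntegrableOn (fun x : ℝ => x ^ m * Real.log (1 - x)) (Set.Ioo (0:ℝ) 1) := by
  refine Integrable.mono integrableOn_log_one_sub ?_ ?_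
  · exact ((measurable_id.pow_const m).mul
      (Real.measurable_log.comp (measurable_const.sub measurable_id))).aestronglyMeasurable
  · rw [ae_restrict_iff' measurableSet_Ioo]
    refine Filter.Eventually.of_forall fun x hx => ?_
    obtain ⟨hx0, hx1⟩ := hx
    rw [norm_mul]
    refine mul_le_of_le_one_left (norm_nonneg _) ?_
    rw [Real.norm_eq_abs, abs_pow]
    exact pow_le_one₀ (abs_nonneg x) (by rw [abs_of_pos hx0]; linarith)


lemma integral_g (n : ℕ) (hn : 1 ≤ n) :
    ∫ x in Set.Ioo (0:ℝ) 1, x ^ (n-1) * Real.log (1 - x) = -(Hs n) / n := by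
  have hn0 : (n:ℝ) ≠ 0 := Nat.cast_ne_zero.2 (by omega)
  set F : ℝ → ℝ := fun x => (x ^ n - 1) / n * Real.log (1 - x)
      - (1/n) * ∑ i ∈ Finset.range n, x ^ (i+1) / ((i:ℝ)+1) with hF
  have hderiv : ∀ x ∈ Set.Ioo (0:ℝ) 1, HasDerivAt F (x ^ (n-1) * Real.log (1-x)) x := by
    intro x hx
    obtain ⟨hx0, hx1⟩ := hx
    have hx1' : x - 1 ≠ 0 := sub_ne_zero.2 (ne_of_lt hx1)
    have h1x : (1:ℝ) - x ≠ 0 := sub_ne_zero.2 (ne_of_gt hx1)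
    have h2 : HasDerivAt (fun y : ℝ => (y ^ n - 1)/(n:ℝ)) (x ^ (n-1)) x := by
      have h := ((hasDerivAt_pow n x).sub_const 1).div_const (n:ℝ)
      rwa [mul_div_cancel_left₀ _ hn0] at h
    have h3 : HasDerivAt (fun y : ℝ => Real.log (1 - y)) (-(1-x)⁻¹) x := by
      have hinner : HasDerivAt (fun y : ℝ => 1 - y) (-1) x := (hasDerivAt_id x).const_sub 1
      have := (Real.hasDerivAt_log h1x).comp x hinner
      rw [mul_neg_one] at this
      exact this
    have h5 : HasDerivAt (fun y : ℝ => ∑ i ∈ Finset.range n, y ^ (i+1) / ((i:ℝ)+1))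
        (∑ i ∈ Finset.range n, x ^ i) x := by
      refine HasDerivAt.fun_sum fun i _ => ?_
      have hne : ((i:ℝ)+1) ≠ 0 := by positivity
      have h := (hasDerivAt_pow (i+1) x).div_const ((i:ℝ)+1)
      simpa [Nat.add_sub_cancel, Nat.cast_add, Nat.cast_one, mul_div_cancel_left₀ _ hne] using h
    have h6 := (h2.mul h3).sub (h5.const_mul (1/(n:ℝ)))
    have hg := geom_sum_mul x n
    have key : (x^n - 1) * (-(1-x)⁻¹) = ∑ i ∈ Finset.range n, x^i := by
      rw [← hg]
      field_simp
      ring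
    refine h6.congr_deriv ?_
    rw [← key]
    ring
  have hint : IntervalIntegrable (fun x : ℝ => x ^ (n-1) * Real.log (1-x)) volume 0 1 := by
    rw [intervalIntegrable_iff_integrableOn_Ioo_of_le (by norm_num)]
    exact integrableOn_g (n-1)
  have hF0 : F 0 = 0 := by
    simp [hF]
  have ha : Tendsto F (nhdsWithin (0:ℝ) (Set.Ioi 0)) (nhds 0) := by
    have hcF : ContinuousAt F 0 := by
      refine ContinuousAt.sub (ContinuousAt.mul ?_ ?_) ?_
      · exact ((continuous_pow n).sub continuous_const).continuousAt.div_const _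
      · exact (Real.continuousAt_log (by norm_num)).comp
          ((continuous_const.sub continuous_id).continuousAt)
      · exact (continuous_const.mul (continuous_finset_sum _ fun i _ =>
          (continuous_pow (i+1)).div_const _)).continuousAt
    have h' : Tendsto F (nhdsWithin (0:ℝ) (Set.Ioi 0)) (nhds (F 0)) :=
      hcF.tendsto.mono_left nhdsWithin_le_nhds
    rwa [hF0] at h'
  have hkey : Tendsto (fun x : ℝ => (1-x) * Real.log (1-x))
      (nhdsWithin (1:ℝ) (Set.Iio 1)) (nhds 0) := by
    have h0 : Tendsto (fun t : ℝ => Real.log t * t) (nhdsWithin 0 (Set.Ioi 0)) (nhds 0) := by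
      simpa using tendsto_log_mul_rpow_nhdsGT_zero one_pos
    have hmap : Tendsto (fun x : ℝ => 1 - x) (nhdsWithin (1:ℝ) (Set.Iio 1))
        (nhdsWithin 0 (Set.Ioi 0)) := by
      apply tendsto_nhdsWithin_of_tendsto_nhds_of_eventually_within
      · have h' : Tendsto (fun x : ℝ => 1 - x) (nhds (1:ℝ)) (nhds (1-1)) :=
          (continuous_const.sub continuous_id).tendsto (1:ℝ)
        rw [sub_self] at h'
        exact h'.mono_left nhdsWithin_le_nhds
      · filter_upwards [self_mem_nhdsWithin] with x hx
        simp only [Set.mem_Iio] at hx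
        simpa using sub_pos.2 hx
    have := h0.comp hmap
    simpa [Function.comp_def, mul_comm] using this
  have hb : Tendsto F (nhdsWithin (1:ℝ) (Set.Iio 1)) (nhds (-(Hs n)/n)) := by
    have hS : Tendsto (fun x : ℝ => (∑ i ∈ Finset.range n, x ^ i))
        (nhdsWithin (1:ℝ) (Set.Iio 1)) (nhds (n:ℝ)) := by
      have h := (continuous_finset_sum (Finset.range n)
        (fun i _ => continuous_pow i)).tendsto (1:ℝ)
      simp only [one_pow, Finset.sum_const, Finset.card_range, nsmul_eq_mul, mul_one] at h
      exact h.mono_left nhdsWithin_le_nhds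
    have h1 : Tendsto (fun x : ℝ => (x^n - 1)/(n:ℝ) * Real.log (1-x))
        (nhdsWithin (1:ℝ) (Set.Iio 1)) (nhds 0) := by
      have hrw : ∀ x : ℝ, (x^n - 1)/(n:ℝ) * Real.log (1-x)
          = -(1/(n:ℝ)) * ((∑ i ∈ Finset.range n, x ^ i) * ((1-x) * Real.log (1-x))) := by
        intro x
        have hg := geom_sum_mul x n
        rw [← hg]
        ring
      have h1' := (hS.mul hkey).const_mul (-(1/(n:ℝ)))
      rw [mul_zero, mul_zero] at h1'
      exact h1'.congr fun x => (hrw x).symm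
    have h2 : Tendsto (fun x : ℝ => (1/(n:ℝ)) * ∑ i ∈ Finset.range n, x^(i+1)/((i:ℝ)+1))
        (nhdsWithin (1:ℝ) (Set.Iio 1)) (nhds ((Hs n)/n)) := by
      have hc : Continuous (fun x : ℝ => (1/(n:ℝ)) * ∑ i ∈ Finset.range n, x^(i+1)/((i:ℝ)+1)) :=
        continuous_const.mul (continuous_finset_sum _ fun i _ => (continuous_pow (i+1)).div_const _)
      have h := hc.tendsto (1:ℝ)
      have hv : (1/(n:ℝ)) * ∑ i ∈ Finset.range n, (1:ℝ)^(i+1)/((i:ℝ)+1) = Hs n / n := by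
        rw [hs_eq_range]
        simp only [one_pow]
        ring
      rw [hv] at h
      exact h.mono_left nhdsWithin_le_nhds
    have h := h1.sub h2
    rw [zero_sub, ← neg_div] at h
    exact h
  have hI := intervalIntegral.integral_eq_sub_of_hasDerivAt_of_tendsto
    (by norm_num : (0:ℝ) < 1) hderiv hint ha hb
  rw [intervalIntegral.integral_of_le (by norm_num : (0:ℝ) ≤ 1),
    integral_Ioc_eq_integral_Ioo] at hI
  rw [hI, sub_zero]


lemma hs_nonneg (n : ℕ) : 0 ≤ Hs n :=
  Finset.sum_nonneg fun k _ => by positivity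

lemma hs_eq_harmonic (n : ℕ) : Hs n = (harmonic n : ℝ) := by
  rw [harmonic_eq_sum_Icc]
  push_cast
  simp [Hs, one_div]


lemma summable_main (p q : ℕ) (hp : 1 ≤ p) (hq : 2 ≤ q) :
    Summable (fun n : ℕ+ => (Hs n)^p / ((n:ℕ):ℝ)^q) := by
  set r : ℝ := 1/(2*p) with hr
  have hrpos : 0 < r := by positivity
  have hbound : ∀ n : ℕ+, (Hs n)^p / ((n:ℕ):ℝ)^q
      ≤ (1 + 2*p)^p * ((n:ℕ):ℝ) ^ (-(3/2) : ℝ) := by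
    intro n
    set N : ℝ := ((n:ℕ):ℝ) with hN
    have hN1 : (1:ℝ) ≤ N := Nat.one_le_cast.mpr n.pos
    have hN0 : (0:ℝ) < N := lt_of_lt_of_le one_pos hN1
    -- H_n ≤ 1 + log N
    have hH : Hs n ≤ 1 + Real.log N := by
      rw [hs_eq_harmonic]
      exact_mod_cast harmonic_le_one_add_log (n:ℕ)
    -- log N ≤ 2p * N^r
    have hlog : Real.log N ≤ (2*p) * N ^ r := by
      have h1 : Real.log (N ^ r) ≤ N ^ r - 1 :=
        Real.log_le_sub_one_of_pos (Real.rpow_pos_of_pos hN0 r)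
      rw [Real.log_rpow hN0] at h1
      have hp' : (0:ℝ) < 2*p := by positivity
      have : Real.log N = (2*p) * (r * Real.log N) := by
        field_simp [hr]
        rw [hr]
        field_simp
      rw [this]
      have h2 : r * Real.log N ≤ N ^ r := le_trans h1 (by linarith [Real.rpow_pos_of_pos hN0 r])
      exact mul_le_mul_of_nonneg_left h2 hp'.le
    have hNr1 : (1:ℝ) ≤ N ^ r := Real.one_le_rpow hN1 hrpos.le
    have hH2 : Hs n ≤ (1 + 2*p) * N ^ r := by
      have : (1:ℝ) + 2*p * N^r ≤ (1 + 2*p) * N^r := by nlinarith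
      linarith
    have hHp : (Hs n)^p ≤ ((1 + 2*p):ℝ)^p * N ^ ((1:ℝ)/2) := by
      calc (Hs n)^p ≤ ((1 + 2*p) * N ^ r)^p :=
            pow_le_pow_left₀ (hs_nonneg _) hH2 p
        _ = ((1 + 2*p):ℝ)^p * (N ^ r)^(p:ℕ) := by rw [mul_pow]
        _ = ((1 + 2*p):ℝ)^p * N ^ ((1:ℝ)/2) := by
            rw [← Real.rpow_natCast (N ^ r) p, ← Real.rpow_mul hN0.le]
            congr 2
            rw [hr]
            field_simp
    have hden : N ^ (2:ℕ) ≤ N ^ q := pow_le_pow_right₀ hN1 hq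
    have h3 : (Hs n)^p / N^q ≤ (((1 + 2*p):ℝ)^p * N ^ ((1:ℝ)/2)) / N^(2:ℕ) := by
      refine div_le_div₀ (by positivity) hHp (by positivity) hden
    refine h3.trans (le_of_eq ?_)
    rw [show (N:ℝ)^(2:ℕ) = N ^ ((2:ℝ)) from by rw [← Real.rpow_natCast N 2]; norm_cast]
    rw [mul_div_assoc, ← Real.rpow_sub hN0]
    norm_num
  refine Summable.of_nonneg_of_le (fun n => div_nonneg (pow_nonneg (hs_nonneg _) _) (by positivity)) hbound ?_
  apply Summable.mul_left
  have h := (Real.summable_nat_rpow (p := -(3/2))).2 (by norm_num)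
  exact h.comp_injective (fun a b h => PNat.coe_injective (by exact_mod_cast h))


/-- For integers `p ≥ 1` and `q ≥ 2`, the nonlinear Euler sum
`S_{1^p,q} = ∑_{n ≥ 1} H_n^p / n^q` equals `(-1)^p` times the Lebesgue integral over the open
unit cube `(0,1)^p` of `Li_{q-p}(x₁⋯x_p) ∏_j log(1-x_j) / (x₁⋯x_p)`. -/
theorem stmt5 (p q : ℕ) (hp : 1 ≤ p) (hq : 2 ≤ q) :
    ∑' n : ℕ+, (∑ k ∈ Finset.Icc 1 (n : ℕ), (1 : ℝ) / (k : ℝ)) ^ p / ((n : ℕ) : ℝ) ^ q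
      = (-1) ^ p *
        ∫ x in (Set.univ.pi fun _ : Fin p => Set.Ioo (0:ℝ) 1),
          Li ((q : ℤ) - (p : ℤ)) (∏ j, x j) * (∏ j, Real.log (1 - x j)) / ∏ j, x j := by
  classical
  set e : ℤ := (q:ℤ) - (p:ℤ) with he
  set cube : Set (Fin p → ℝ) := Set.univ.pi fun _ : Fin p => Set.Ioo (0:ℝ) 1 with hcube
  have hcubem : MeasurableSet cube := MeasurableSet.univ_pi fun _ => measurableSet_Ioo
  set G : ℕ+ → ℝ → ℝ :=
    fun n => (Set.Ioo (0:ℝ) 1).indicator (fun y => y^((n:ℕ)-1) * Real.log (1-y)) with hGdef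
  set F : ℕ+ → (Fin p → ℝ) → ℝ :=
    fun n x => ((((n:ℕ):ℝ))^e)⁻¹ * ∏ j, G n (x j) with hFdef
  -- basic facts
  have hn0 : ∀ n : ℕ+, (0:ℝ) < ((n:ℕ):ℝ) := fun n => by exact_mod_cast n.pos
  have hce : ∀ n : ℕ+, (0:ℝ) < ((n:ℕ):ℝ)^e := fun n => zpow_pos (hn0 n) e
  have hzpq : ∀ n : ℕ+, ((n:ℕ):ℝ)^(q:ℕ) = ((n:ℕ):ℝ)^e * ((n:ℕ):ℝ)^(p:ℕ) := by
    intro n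
    rw [← zpow_natCast ((n:ℕ):ℝ) p, ← zpow_natCast ((n:ℕ):ℝ) q, ← zpow_add₀ (hn0 n).ne']
    congr 1
    rw [he]; ring
  have hGint : ∀ n : ℕ+, Integrable (G n) := fun n =>
    (integrable_indicator_iff measurableSet_Ioo).2 (integrableOn_g _)
  have hGval : ∀ n : ℕ+, ∫ y, G n y = -(Hs n) / ((n:ℕ):ℝ) := by
    intro n
    simp only [hGdef]
    rw [integral_indicator measurableSet_Ioo]
    exact integral_g (n:ℕ) n.pos
  have hGnonpos : ∀ (n : ℕ+) (y : ℝ), G n y ≤ 0 := by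
    intro n y
    simp only [hGdef]
    by_cases hy : y ∈ Set.Ioo (0:ℝ) 1
    · rw [Set.indicator_of_mem hy]
      have h1 : (0:ℝ) ≤ y^((n:ℕ)-1) := pow_nonneg hy.1.le _
      have h2 : Real.log (1 - y) ≤ 0 := Real.log_nonpos (by linarith [hy.2]) (by linarith [hy.1])
      exact mul_nonpos_iff.2 (Or.inl ⟨h1, h2⟩)
    · rw [Set.indicator_of_notMem hy]
  have hGnorm : ∀ n : ℕ+, ∫ y, ‖G n y‖ = Hs n / ((n:ℕ):ℝ) := by
    intro n
    have h1 : (fun y => ‖G n y‖) = fun y => -(G n y) :=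
      funext fun y => by rw [Real.norm_eq_abs, abs_of_nonpos (hGnonpos n y)]
    rw [h1, integral_neg, hGval, neg_div, neg_neg]
  have hFint : ∀ n : ℕ+, Integrable (F n) := by
    intro n
    exact (Integrable.fintype_prod (f := fun _ : Fin p => G n) (fun _ => hGint n)).const_mul _
  have hFval : ∀ n : ℕ+, ∫ x, F n x = (((n:ℕ):ℝ)^e)⁻¹ * (-(Hs n) / ((n:ℕ):ℝ))^p := by
    intro n
    simp only [hFdef]
    rw [integral_const_mul]
    rw [volume_pi, integral_fintype_prod_eq_pow (ι := Fin p) (G n), hGval n, Fintype.card_fin]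
  have hFnorm : ∀ n : ℕ+, ∫ x, ‖F n x‖ = (Hs n)^p / ((n:ℕ):ℝ)^(q:ℕ) := by
    intro n
    have h1 : (fun x : Fin p → ℝ => ‖F n x‖)
        = fun x => (((n:ℕ):ℝ)^e)⁻¹ * ∏ j, ‖G n (x j)‖ := by
      funext x
      simp only [hFdef]
      rw [Real.norm_eq_abs, abs_mul, abs_of_pos (by positivity), Finset.abs_prod]
      simp only [Real.norm_eq_abs]
    rw [h1, integral_const_mul, volume_pi, integral_fintype_prod_eq_pow (ι := Fin p) (fun y => ‖G n y‖),
      hGnorm n, Fintype.card_fin, div_pow, hzpq n]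
    field_simp
  have hnormsum : Summable fun n : ℕ+ => ∫ x, ‖F n x‖ :=
    (summable_main p q hp hq).congr fun n => (hFnorm n).symm
  have hinter := MeasureTheory.integral_tsum_of_summable_integral_norm hFint hnormsum
  -- pointwise identity
  have hpt : ∀ x : Fin p → ℝ, ∑' n : ℕ+, F n x
      = cube.indicator
        (fun x => Li e (∏ j, x j) * (∏ j, Real.log (1 - x j)) / ∏ j, x j) x := by
    intro x
    by_cases hx : x ∈ cube
    · have hxj : ∀ j, x j ∈ Set.Ioo (0:ℝ) 1 := Set.mem_univ_pi.1 hx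
      have ht0 : 0 < ∏ j, x j := Finset.prod_pos fun j _ => (hxj j).1
      rw [Set.indicator_of_mem hx]
      have hterm : ∀ n : ℕ+, F n x
          = (∏ j, x j) ^ ((n:ℕ)) / ((n:ℕ):ℝ)^e * ((∏ j, Real.log (1 - x j)) / ∏ j, x j) := by
        intro n
        have hGx : ∀ j, G n (x j) = (x j)^((n:ℕ)-1) * Real.log (1 - x j) :=
          fun j => Set.indicator_of_mem (hxj j) _
        simp only [hFdef]
        simp only [hGx]
        rw [Finset.prod_mul_distrib, Finset.prod_pow]
        have hkk : (∏ j, x j) ^ ((n:ℕ)-1) * (∏ j, x j) = (∏ j, x j) ^ (n:ℕ) := by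
          conv_rhs => rw [show (n:ℕ) = ((n:ℕ)-1)+1 from (Nat.succ_pred_eq_of_pos n.pos).symm]
          rw [pow_succ]
        rw [← hkk]
        field_simp
      simp only [Li]
      rw [mul_div_assoc, ← tsum_mul_right]
      exact tsum_congr fun n => by rw [hterm n]
    · rw [Set.indicator_of_notMem hx]
      have hz : ∀ n : ℕ+, F n x = 0 := by
        intro n
        obtain ⟨j, hj⟩ : ∃ j, x j ∉ Set.Ioo (0:ℝ) 1 := by
          by_contra h
          push_neg at h
          exact hx (Set.mem_univ_pi.2 h)
        simp only [hFdef]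
        rw [Finset.prod_eq_zero (Finset.mem_univ j) (Set.indicator_of_notMem hj _), mul_zero]
      simp only [hz, tsum_zero]
  have hR : (∫ x in cube,
        Li e (∏ j, x j) * (∏ j, Real.log (1 - x j)) / ∏ j, x j)
      = ∑' n : ℕ+, ∫ x, F n x := by
    rw [← integral_indicator hcubem]
    rw [show (cube.indicator
        (fun x => Li e (∏ j, x j) * (∏ j, Real.log (1 - x j)) / ∏ j, x j))
      = fun x => ∑' n : ℕ+, F n x from funext fun x => (hpt x).symm]
    exact hinter.symm
  rw [hR, ← tsum_mul_left]
  refine tsum_congr fun n => ?_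
  rw [hFval n]
  have hsq : ((-1:ℝ))^p * ((-1:ℝ))^p = 1 := by
    rw [← mul_pow]; norm_num
  have hneg : (-(Hs n) / ((n:ℕ):ℝ))^p = (-1:ℝ)^p * (Hs n / ((n:ℕ):ℝ))^p := by
    rw [neg_div, neg_pow]
  rw [hneg]
  calc (Hs (n:ℕ))^p / ((n:ℕ):ℝ)^(q:ℕ)
      = (((-1:ℝ))^p * ((-1:ℝ))^p) * ((((n:ℕ):ℝ)^e)⁻¹ * (Hs n / ((n:ℕ):ℝ))^p) := by
        rw [hsq, one_mul, div_pow, hzpq n]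
        field_simp
    _ = (-1:ℝ)^p * ((((n:ℕ):ℝ)^e)⁻¹ * ((-1:ℝ)^p * (Hs n / ((n:ℕ):ℝ))^p)) := by ring
end

section
/- For all integers q ≥ 2 and m ≥ 0, the integrals J(m,1,q) = ∫₀¹ x^m Li₁(x) Li_q(x) dx satisfy J(m,1,q) = ζ(q)/(m+1) - (1/(m+1))·[m·J₀(m,q) + J₀(m,q-1)] + (1/(m+1))·[m·J(m-1,1,q) + J(m-1,1,q-1) - J(m,1,q-1)], where J₀(m,q) := ∫₀¹ x^m Li_q(x) dx. -/
open MeasureTheory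

/-- The integral `J(m,p,q) = ∫₀¹ x^m Li_p(x) Li_q(x) dx` (with integer exponent `m`). -/
noncomputable def J (m : ℤ) (p q : ℤ) : ℝ := ∫ x in (0:ℝ)..1, x ^ m * Li p x * Li q x

/-- The integral `J₀(m,q) = ∫₀¹ x^m Li_q(x) dx` (with integer exponent `m`). -/
noncomputable def J0 (m : ℤ) (q : ℤ) : ℝ := ∫ x in (0:ℝ)..1, x ^ m * Li q x

open Filter Topology Set

lemma pnat_cast_pos (k : ℕ+) : (0:ℝ) < ((k:ℕ):ℝ) := by exact_mod_cast k.pos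
lemma pnat_one_le (k : ℕ+) : (1:ℝ) ≤ ((k:ℕ):ℝ) := by exact_mod_cast k.one_le

lemma summable_pnat_of_nat {f : ℕ → ℝ} (h : Summable f) : Summable (fun k : ℕ+ => f k) :=
  h.comp_injective (fun a b hab => by exact_mod_cast PNat.coe_injective hab)

lemma summable_one_div_pnat_sq : Summable (fun k : ℕ+ => 1 / ((k:ℕ):ℝ) ^ 2) :=
  summable_pnat_of_nat (Real.summable_one_div_nat_pow.mpr one_lt_two)

/-- inner sum `A c = ∑_{j≥1} 1/(j(j+c))`. -/
noncomputable def Aux (c : ℝ) : ℝ := ∑' j : ℕ+, 1 / (((j:ℕ):ℝ) * (((j:ℕ):ℝ) + c))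

lemma Aux_summable {c : ℝ} (hc : 0 ≤ c) :
    Summable (fun j : ℕ+ => 1 / (((j:ℕ):ℝ) * (((j:ℕ):ℝ) + c))) := by
  refine Summable.of_nonneg_of_le (fun j => by positivity) (fun j => ?_) summable_one_div_pnat_sq
  have h1 : (0:ℝ) < (j:ℕ) := pnat_cast_pos j
  apply one_div_le_one_div_of_le (by positivity)
  rw [sq]
  have h2 : (1:ℝ) ≤ (j:ℕ) := pnat_one_le j
  nlinarith

lemma telescope {c : ℝ} (hc : 0 ≤ c) :
    HasSum (fun j : ℕ+ => 1 / (((j:ℕ):ℝ) + c) - 1 / (((j:ℕ):ℝ) + c + 1)) (1 / (1 + c)) := by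
  have hs : Summable (fun j : ℕ+ => 1 / (((j:ℕ):ℝ) + c) - 1 / (((j:ℕ):ℝ) + c + 1)) := by
    refine Summable.of_nonneg_of_le (fun j => ?_) (fun j => ?_) summable_one_div_pnat_sq
    · have h1 : (0:ℝ) < (j:ℕ) := pnat_cast_pos j
      rw [sub_nonneg]
      apply one_div_le_one_div_of_le (by positivity); linarith
    · have h1 : (1:ℝ) ≤ (j:ℕ) := pnat_one_le j
      have h0 : (0:ℝ) < (j:ℕ) := pnat_cast_pos j
      have e : 1 / (((j:ℕ):ℝ) + c) - 1 / (((j:ℕ):ℝ) + c + 1)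
          = 1 / ((((j:ℕ):ℝ) + c) * (((j:ℕ):ℝ) + c + 1)) := by
        first
        | (field_simp; ring)
        | field_simp
      rw [e, sq]
      apply one_div_le_one_div_of_le (by positivity)
      nlinarith
  -- transfer to ℕ via the equiv
  rw [← Equiv.pnatEquivNat.symm.hasSum_iff]
  have hs' : Summable ((fun j : ℕ+ => 1 / (((j:ℕ):ℝ) + c) - 1 / (((j:ℕ):ℝ) + c + 1)) ∘ Equiv.pnatEquivNat.symm) :=
    (Equiv.pnatEquivNat.symm.summable_iff).mpr hs
  rw [hs'.hasSum_iff_tendsto_nat]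
  have key : ∀ n : ℕ, (∑ i ∈ Finset.range n,
      ((fun j : ℕ+ => 1 / (((j:ℕ):ℝ) + c) - 1 / (((j:ℕ):ℝ) + c + 1)) ∘ Equiv.pnatEquivNat.symm) i)
      = 1 / (1 + c) - 1 / ((n:ℝ) + 1 + c) := by
    intro n
    induction n with
    | zero => simp
    | succ n ih =>
      rw [Finset.sum_range_succ, ih]
      simp only [Function.comp_apply, Equiv.pnatEquivNat_symm_apply]
      have : ((↑(n.succPNat) : ℕ) : ℝ) = (n:ℝ) + 1 := by
        simp [Nat.succPNat]
      rw [this]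
      push_cast
      ring
  simp only [key]
  have hto : Tendsto (fun n : ℕ => ((n:ℝ) + 1 + c)) atTop atTop := by
    apply tendsto_atTop_add_const_right
    apply tendsto_atTop_add_const_right
    exact tendsto_natCast_atTop_atTop
  have : Tendsto (fun n : ℕ => 1 / ((n:ℝ) + 1 + c)) atTop (𝓝 0) := by
    simpa [one_div, Pi.inv_def] using hto.inv_tendsto_atTop
  have final : Tendsto (fun n : ℕ => 1/(1+c) - 1/((n:ℝ)+1+c)) atTop (𝓝 (1/(1+c) - 0)) :=
    Tendsto.sub tendsto_const_nhds this
  simpa using final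

lemma Aux_rec {c : ℝ} (hc : 0 ≤ c) : (c + 1) * Aux (c + 1) - c * Aux c = 1 / (c + 1) := by
  have h1 := Aux_summable (by linarith : (0:ℝ) ≤ c + 1)
  have h0 := Aux_summable hc
  unfold Aux
  rw [← Summable.tsum_mul_left _ h1, ← Summable.tsum_mul_left _ h0,
    ← Summable.tsum_sub (h1.mul_left _) (h0.mul_left _)]
  have e : ∀ j : ℕ+, (c+1) * (1 / (((j:ℕ):ℝ) * (((j:ℕ):ℝ) + (c+1)))) - c * (1 / (((j:ℕ):ℝ) * (((j:ℕ):ℝ) + c)))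
      = 1 / (((j:ℕ):ℝ) + c) - 1 / (((j:ℕ):ℝ) + c + 1) := by
    intro j
    have h0 : (0:ℝ) < (j:ℕ) := pnat_cast_pos j
    field_simp
    ring
  rw [tsum_congr e]
  rw [(telescope hc).tsum_eq, add_comm 1 c]

lemma summable_one_div_pnat_sqrt : Summable (fun k : ℕ+ => 1 / (((k:ℕ):ℝ) * Real.sqrt ((k:ℕ):ℝ))) := by
  have h : Summable (fun n : ℕ => 1 / (n:ℝ) ^ (3/2 : ℝ)) :=
    Real.summable_one_div_nat_rpow.mpr (by norm_num)
  refine (summable_pnat_of_nat h).congr (fun k => ?_)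
  have h0 : (0:ℝ) < ((k:ℕ):ℝ) := pnat_cast_pos k
  congr 1
  rw [show (3/2 : ℝ) = 1 + 1/2 by norm_num, Real.rpow_add h0, Real.rpow_one,
    ← Real.sqrt_eq_rpow]

/-- Master summability of `1/(j k (j + k + c))` over pairs. -/
lemma master_summable {c : ℝ} (hc : 0 ≤ c) :
    Summable (fun p : ℕ+ × ℕ+ =>
      1 / (((p.1:ℕ):ℝ) * ((p.2:ℕ):ℝ) * (((p.1:ℕ):ℝ) + ((p.2:ℕ):ℝ) + c))) := by
  have hs := (summable_one_div_pnat_sqrt.mul_of_nonneg summable_one_div_pnat_sqrt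
      (fun k => by positivity) (fun k => by positivity)).mul_left (1/2 : ℝ)
  refine Summable.of_nonneg_of_le (fun p => by positivity) (fun p => ?_) hs
  obtain ⟨j, k⟩ := p
  have hj : (0:ℝ) < ((j:ℕ):ℝ) := pnat_cast_pos j
  have hk : (0:ℝ) < ((k:ℕ):ℝ) := pnat_cast_pos k
  have hsj : Real.sqrt ((j:ℕ):ℝ) ^ 2 = ((j:ℕ):ℝ) := Real.sq_sqrt hj.le
  have hsk : Real.sqrt ((k:ℕ):ℝ) ^ 2 = ((k:ℕ):ℝ) := Real.sq_sqrt hk.le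
  have hsjp : (0:ℝ) < Real.sqrt ((j:ℕ):ℝ) := Real.sqrt_pos.mpr hj
  have hskp : (0:ℝ) < Real.sqrt ((k:ℕ):ℝ) := Real.sqrt_pos.mpr hk
  have hamgm : 2 * (Real.sqrt ((j:ℕ):ℝ) * Real.sqrt ((k:ℕ):ℝ)) ≤ ((j:ℕ):ℝ) + ((k:ℕ):ℝ) := by
    nlinarith [sq_nonneg (Real.sqrt ((j:ℕ):ℝ) - Real.sqrt ((k:ℕ):ℝ))]
  have key : 2 * (((j:ℕ):ℝ) * Real.sqrt ((j:ℕ):ℝ)) * (((k:ℕ):ℝ) * Real.sqrt ((k:ℕ):ℝ))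
      ≤ ((j:ℕ):ℝ) * ((k:ℕ):ℝ) * (((j:ℕ):ℝ) + ((k:ℕ):ℝ) + c) := by
    nlinarith [mul_pos hj hk, mul_pos hsjp hskp]
  have h2 : 1 / (((j:ℕ):ℝ) * ((k:ℕ):ℝ) * (((j:ℕ):ℝ) + ((k:ℕ):ℝ) + c))
      ≤ 1 / (2 * (((j:ℕ):ℝ) * Real.sqrt ((j:ℕ):ℝ)) * (((k:ℕ):ℝ) * Real.sqrt ((k:ℕ):ℝ))) := by
    apply one_div_le_one_div_of_le (by positivity)
    simpa [mul_assoc] using key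
  calc 1 / (((j:ℕ):ℝ) * ((k:ℕ):ℝ) * (((j:ℕ):ℝ) + ((k:ℕ):ℝ) + c))
      ≤ 1 / (2 * (((j:ℕ):ℝ) * Real.sqrt ((j:ℕ):ℝ)) * (((k:ℕ):ℝ) * Real.sqrt ((k:ℕ):ℝ))) := h2
    _ = 1/2 * (1 / (((j:ℕ):ℝ) * Real.sqrt ((j:ℕ):ℝ)) * (1 / (((k:ℕ):ℝ) * Real.sqrt ((k:ℕ):ℝ)))) := by
        field_simp

lemma integral_pow_Ioo (n : ℕ) (c : ℝ) :
    ∫ x in Ioo (0:ℝ) 1, x ^ n * c = c / ((n:ℝ)+1) := by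
  rw [← integral_Ioc_eq_integral_Ioo, ← intervalIntegral.integral_of_le zero_le_one,
    intervalIntegral.integral_mul_const, integral_pow]
  norm_num
  ring

lemma integral_norm_pow_Ioo (n : ℕ) {c : ℝ} (hc : 0 ≤ c) :
    ∫ x in Ioo (0:ℝ) 1, ‖x ^ n * c‖ = c / ((n:ℝ)+1) := by
  rw [setIntegral_congr_fun measurableSet_Ioo (g := fun x => x ^ n * c)
    (fun x hx => by
      rw [Real.norm_eq_abs, abs_of_nonneg]
      have := hx.1
      positivity), integral_pow_Ioo]

lemma integrable_pow_Ioo (n : ℕ) (c : ℝ) :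
    Integrable (fun x => x ^ n * c) (volume.restrict (Ioo (0:ℝ) 1)) := by
  have : IntegrableOn (fun x : ℝ => x ^ n * c) (Icc (0:ℝ) 1) volume :=
    ((continuous_pow n).mul continuous_const).integrableOn_Icc
  exact this.mono_set Ioo_subset_Icc_self

lemma Li_summable_norm {x : ℝ} (hx0 : 0 ≤ x) (hx1 : x < 1) {n : ℤ} (hn : 0 ≤ n) :
    Summable (fun k : ℕ+ => ‖x ^ (k:ℕ) / ((k:ℕ):ℝ) ^ n‖) := by
  refine Summable.of_nonneg_of_le (fun k => norm_nonneg _) (fun k => ?_)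
    (summable_pnat_of_nat (summable_geometric_of_lt_one hx0 hx1))
  rw [Real.norm_eq_abs, abs_of_nonneg (by positivity)]
  have he : ((k:ℕ):ℝ) ^ n = ((k:ℕ):ℝ) ^ (n.toNat) := by
    rw [← zpow_natCast, Int.toNat_of_nonneg hn]
  exact div_le_self (by positivity) (he ▸ one_le_pow₀ (pnat_one_le k))

lemma toNat_cast_real {m : ℤ} (hm : 0 ≤ m) : (((m.toNat : ℕ)) : ℝ) = (m:ℝ) := by
  exact_mod_cast congrArg (Int.cast : ℤ → ℝ) (Int.toNat_of_nonneg hm)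

lemma J0_ser (m : ℤ) (hm : 0 ≤ m) (q : ℕ) (hq : 1 ≤ q) :
    J0 m (q:ℤ) = ∑' k : ℕ+, 1 / (((k:ℕ):ℝ) ^ q * ((m:ℝ) + 1 + ((k:ℕ):ℝ))) := by
  unfold J0
  rw [intervalIntegral.integral_of_le zero_le_one, integral_Ioc_eq_integral_Ioo]
  have hpt : ∀ x ∈ Ioo (0:ℝ) 1, x ^ m * Li (q:ℤ) x
      = ∑' k : ℕ+, x ^ ((m + (k:ℕ)).toNat) * (1 / ((k:ℕ):ℝ) ^ q) := by
    intro x hx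
    have hx0 : (0:ℝ) < x := hx.1
    unfold Li
    rw [← tsum_mul_left]
    refine tsum_congr (fun k => ?_)
    have e1 : x ^ m * (x ^ (k:ℕ) / ((k:ℕ):ℝ) ^ (q:ℤ))
        = (x ^ m * x ^ ((k:ℕ):ℤ)) * (1 / ((k:ℕ):ℝ) ^ q) := by
      rw [zpow_natCast, zpow_natCast]
      ring
    rw [e1, ← zpow_add₀ hx0.ne',
      ← Int.toNat_of_nonneg (add_nonneg hm (Int.natCast_nonneg (k:ℕ))), zpow_natCast,
      Int.toNat_natCast]
  rw [setIntegral_congr_fun measurableSet_Ioo hpt]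
  rw [← integral_tsum_of_summable_integral_norm
    (fun k => integrable_pow_Ioo _ _) ?hsum]
  case hsum =>
    have he : ∀ k : ℕ+, (∫ x in Ioo (0:ℝ) 1, ‖x ^ ((m + (k:ℕ)).toNat) * (1 / ((k:ℕ):ℝ) ^ q)‖)
        = (1 / ((k:ℕ):ℝ) ^ q) / ((m:ℝ) + (k:ℕ) + 1) := by
      intro k
      rw [integral_norm_pow_Ioo _ (by positivity)]
      congr 2
      rw [toNat_cast_real (by positivity)]
      push_cast
      ring
    rw [funext he]
    refine Summable.of_nonneg_of_le (fun k => by positivity) (fun k => ?_) summable_one_div_pnat_sq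
    have hk1 : (1:ℝ) ≤ ((k:ℕ):ℝ) := pnat_one_le k
    have hk0 : (0:ℝ) < ((k:ℕ):ℝ) := pnat_cast_pos k
    have hq1 : ((k:ℕ):ℝ) ≤ ((k:ℕ):ℝ) ^ q := le_self_pow₀ hk1 (by omega)
    have hm' : (0:ℝ) ≤ (m:ℝ) := by exact_mod_cast hm
    rw [div_div, sq]
    apply one_div_le_one_div_of_le (by positivity)
    nlinarith
  refine tsum_congr (fun k => ?_)
  rw [integral_pow_Ioo, toNat_cast_real (add_nonneg hm (Int.natCast_nonneg (k:ℕ))), div_div]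
  push_cast
  ring_nf

lemma J_pair_summable (m : ℤ) (hm : -1 ≤ m) (q : ℕ) (hq : 1 ≤ q) :
    Summable (fun p : ℕ+ × ℕ+ =>
      1 / (((p.1:ℕ):ℝ)^q * ((p.2:ℕ):ℝ) * ((m:ℝ) + 1 + ((p.1:ℕ):ℝ) + ((p.2:ℕ):ℝ)))) := by
  have hc : (0:ℝ) ≤ (m:ℝ) + 1 := by
    have : (0:ℤ) ≤ m + 1 := by omega
    exact_mod_cast this
  refine Summable.of_nonneg_of_le (fun p => ?_) (fun p => ?_) (master_summable hc)
  · have h1 := pnat_cast_pos p.1; have h2 := pnat_cast_pos p.2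
    positivity
  · have h1 := pnat_cast_pos p.1; have h2 := pnat_cast_pos p.2
    have h1' := pnat_one_le p.1; have h2' := pnat_one_le p.2
    have hpow : ((p.1:ℕ):ℝ) ≤ ((p.1:ℕ):ℝ)^q := le_self_pow₀ h1' (by omega)
    apply one_div_le_one_div_of_le (by positivity)
    have : ((p.1:ℕ):ℝ) + ((p.2:ℕ):ℝ) + ((m:ℝ)+1) = (m:ℝ) + 1 + ((p.1:ℕ):ℝ) + ((p.2:ℕ):ℝ) := by ring
    rw [this]
    have hpos : (0:ℝ) < (m:ℝ) + 1 + ((p.1:ℕ):ℝ) + ((p.2:ℕ):ℝ) := by linarith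
    exact mul_le_mul_of_nonneg_right (mul_le_mul_of_nonneg_right hpow h2.le) hpos.le

lemma J_ser (m : ℤ) (hm : -1 ≤ m) (q : ℕ) (hq : 1 ≤ q) :
    J m 1 (q:ℤ) = ∑' p : ℕ+ × ℕ+,
      1 / (((p.1:ℕ):ℝ)^q * ((p.2:ℕ):ℝ) * ((m:ℝ) + 1 + ((p.1:ℕ):ℝ) + ((p.2:ℕ):ℝ))) := by
  unfold J
  rw [intervalIntegral.integral_of_le zero_le_one, integral_Ioc_eq_integral_Ioo]
  have hpt : ∀ x ∈ Ioo (0:ℝ) 1, x ^ m * Li 1 x * Li (q:ℤ) x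
      = ∑' p : ℕ+ × ℕ+, x ^ ((m + (p.1:ℕ) + (p.2:ℕ)).toNat)
          * (1 / (((p.1:ℕ):ℝ)^q * ((p.2:ℕ):ℝ))) := by
    intro x hx
    have hx0 : (0:ℝ) < x := hx.1
    have hx1 : x < 1 := hx.2
    have hprod : Li (q:ℤ) x * Li 1 x = ∑' p : ℕ+ × ℕ+,
        (x ^ ((p.1:ℕ)) / ((p.1:ℕ):ℝ) ^ (q:ℤ)) * (x ^ ((p.2:ℕ)) / ((p.2:ℕ):ℝ) ^ (1:ℤ)) := by
      unfold Li
      exact tsum_mul_tsum_of_summable_norm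
        (Li_summable_norm hx0.le hx1 (by positivity))
        (Li_summable_norm hx0.le hx1 (by norm_num))
    have comm : x ^ m * Li 1 x * Li (q:ℤ) x = x ^ m * (Li (q:ℤ) x * Li 1 x) := by ring
    rw [comm, hprod, ← tsum_mul_left]
    refine tsum_congr (fun p => ?_)
    have hnn : (0:ℤ) ≤ m + (p.1:ℕ) + (p.2:ℕ) := by
      have := p.1.one_le; have := p.2.one_le
      have h1 : (1:ℤ) ≤ ((p.1:ℕ):ℤ) := by exact_mod_cast p.1.one_le
      have h2 : (1:ℤ) ≤ ((p.2:ℕ):ℤ) := by exact_mod_cast p.2.one_le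
      omega
    have e1 : x ^ m * ((x ^ ((p.1:ℕ)) / ((p.1:ℕ):ℝ) ^ (q:ℤ)) * (x ^ ((p.2:ℕ)) / ((p.2:ℕ):ℝ) ^ (1:ℤ)))
        = (x ^ m * x ^ (((p.1:ℕ)):ℤ) * x ^ (((p.2:ℕ)):ℤ)) * (1 / (((p.1:ℕ):ℝ)^q * ((p.2:ℕ):ℝ))) := by
      rw [zpow_natCast, zpow_natCast, zpow_natCast, zpow_one]
      ring
    rw [e1, ← zpow_add₀ hx0.ne', ← zpow_add₀ hx0.ne',
      ← Int.toNat_of_nonneg hnn, zpow_natCast, Int.toNat_natCast]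
  rw [setIntegral_congr_fun measurableSet_Ioo hpt]
  rw [← integral_tsum_of_summable_integral_norm (fun p => integrable_pow_Ioo _ _) ?hsum]
  case hsum =>
    have he : ∀ p : ℕ+ × ℕ+, (∫ x in Ioo (0:ℝ) 1,
        ‖x ^ ((m + (p.1:ℕ) + (p.2:ℕ)).toNat) * (1 / (((p.1:ℕ):ℝ)^q * ((p.2:ℕ):ℝ)))‖)
        = 1 / (((p.1:ℕ):ℝ)^q * ((p.2:ℕ):ℝ) * ((m:ℝ) + 1 + ((p.1:ℕ):ℝ) + ((p.2:ℕ):ℝ))) := by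
      intro p
      have h1 := pnat_cast_pos p.1; have h2 := pnat_cast_pos p.2
      have hnn : (0:ℤ) ≤ m + (p.1:ℕ) + (p.2:ℕ) := by
        have h1' : (1:ℤ) ≤ ((p.1:ℕ):ℤ) := by exact_mod_cast p.1.one_le
        have h2' : (1:ℤ) ≤ ((p.2:ℕ):ℤ) := by exact_mod_cast p.2.one_le
        omega
      rw [integral_norm_pow_Ioo _ (by positivity), toNat_cast_real hnn, div_div]
      push_cast
      ring_nf
    rw [funext he]
    exact J_pair_summable m hm q hq
  refine tsum_congr (fun p => ?_)
  have hnn : (0:ℤ) ≤ m + (p.1:ℕ) + (p.2:ℕ) := by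
    have h1' : (1:ℤ) ≤ ((p.1:ℕ):ℤ) := by exact_mod_cast p.1.one_le
    have h2' : (1:ℤ) ≤ ((p.2:ℕ):ℤ) := by exact_mod_cast p.2.one_le
    omega
  rw [integral_pow_Ioo, toNat_cast_real hnn, div_div]
  push_cast
  ring_nf

lemma auxInnerSum (a c : ℝ) :
    ∑' j : ℕ+, 1 / (a * ((j:ℕ):ℝ) * (c + ((j:ℕ):ℝ))) = (1/a) * Aux c := by
  unfold Aux
  rw [← tsum_mul_left]
  refine tsum_congr (fun j => ?_)
  rw [div_mul_div_comm, one_mul]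
  congr 1
  ring

/-- iterated form of the J series -/
lemma J_ser' (m : ℤ) (hm : -1 ≤ m) (q : ℕ) (hq : 1 ≤ q) :
    J m 1 (q:ℤ) = ∑' k : ℕ+, (1 / ((k:ℕ):ℝ)^q) * Aux ((m:ℝ) + 1 + ((k:ℕ):ℝ)) := by
  rw [J_ser m hm q hq, Summable.tsum_prod (J_pair_summable m hm q hq)]
  exact tsum_congr (fun k => by
    simpa using auxInnerSum (((k:ℕ):ℝ)^q) ((m:ℝ) + 1 + ((k:ℕ):ℝ)))

lemma J_col_summable (m : ℤ) (hm : -1 ≤ m) (q : ℕ) (hq : 1 ≤ q) :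
    Summable (fun k : ℕ+ => (1 / ((k:ℕ):ℝ)^q) * Aux ((m:ℝ) + 1 + ((k:ℕ):ℝ))) :=
  ((J_pair_summable m hm q hq).prod).congr (fun k => by
    simpa using auxInnerSum (((k:ℕ):ℝ)^q) ((m:ℝ) + 1 + ((k:ℕ):ℝ)))

lemma J0_summable (m : ℤ) (hm : 0 ≤ m) (q : ℕ) (hq : 1 ≤ q) :
    Summable (fun k : ℕ+ => 1 / (((k:ℕ):ℝ) ^ q * ((m:ℝ) + 1 + ((k:ℕ):ℝ)))) := by
  refine Summable.of_nonneg_of_le (fun k => by positivity) (fun k => ?_) summable_one_div_pnat_sq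
  have hk1 := pnat_one_le k
  have hk0 := pnat_cast_pos k
  have hm' : (0:ℝ) ≤ (m:ℝ) := by exact_mod_cast hm
  have hpow : ((k:ℕ):ℝ) ≤ ((k:ℕ):ℝ) ^ q := le_self_pow₀ hk1 (by omega)
  rw [sq]
  apply one_div_le_one_div_of_le (by positivity)
  nlinarith

lemma zeta_summable (q : ℕ) (hq : 2 ≤ q) :
    Summable (fun k : ℕ+ => 1 / ((k:ℕ):ℝ) ^ q) := by
  refine Summable.of_nonneg_of_le (fun k => by positivity) (fun k => ?_) summable_one_div_pnat_sq
  exact one_div_le_one_div_of_le (by positivity) (pow_le_pow_right₀ (pnat_one_le k) hq)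

/-- For integers `q ≥ 2` and `m ≥ 0`, the integrals `J(m,1,q)` satisfy
`J(m,1,q) = ζ(q)/(m+1) - (1/(m+1))(m J₀(m,q) + J₀(m,q-1))
  + (1/(m+1))(m J(m-1,1,q) + J(m-1,1,q-1) - J(m,1,q-1))`. -/
theorem stmt11 (m : ℤ) (q : ℕ) (hm : 0 ≤ m) (hq : 2 ≤ q) :
    J m 1 q = zetaR q / ((m : ℝ) + 1)
        - (1 / ((m : ℝ) + 1)) * ((m : ℝ) * J0 m q + J0 m ((q : ℤ) - 1))
        + (1 / ((m : ℝ) + 1)) *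
            ((m : ℝ) * J (m - 1) 1 q + J (m - 1) 1 ((q : ℤ) - 1) - J m 1 ((q : ℤ) - 1)) := by
  have hq1 : ((q - 1 : ℕ) : ℤ) = (q : ℤ) - 1 := by
    have : 1 ≤ q := by omega
    push_cast [this]
    ring
  have hm1 : -1 ≤ m := by omega
  have hm1' : -1 ≤ m - 1 := by omega
  have hmm : ((m - 1 : ℤ) : ℝ) = (m : ℝ) - 1 := by push_cast; ring
  -- representations
  have e1 := J_ser' m hm1 q (by omega)
  have e2 : J m 1 ((q:ℤ) - 1)
      = ∑' k : ℕ+, (1 / ((k:ℕ):ℝ)^(q-1)) * Aux ((m:ℝ) + 1 + ((k:ℕ):ℝ)) := by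
    rw [← hq1]; exact J_ser' m hm1 (q-1) (by omega)
  have e3 : J (m-1) 1 (q:ℤ)
      = ∑' k : ℕ+, (1 / ((k:ℕ):ℝ)^q) * Aux ((m:ℝ) + ((k:ℕ):ℝ)) := by
    rw [J_ser' (m-1) hm1' q (by omega)]
    exact tsum_congr (fun k => by rw [hmm]; ring_nf)
  have e4 : J (m-1) 1 ((q:ℤ) - 1)
      = ∑' k : ℕ+, (1 / ((k:ℕ):ℝ)^(q-1)) * Aux ((m:ℝ) + ((k:ℕ):ℝ)) := by
    rw [← hq1, J_ser' (m-1) hm1' (q-1) (by omega)]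
    exact tsum_congr (fun k => by rw [hmm]; ring_nf)
  have e5 := J0_ser m hm q (by omega)
  have e6 : J0 m ((q:ℤ) - 1)
      = ∑' k : ℕ+, 1 / (((k:ℕ):ℝ)^(q-1) * ((m:ℝ) + 1 + ((k:ℕ):ℝ))) := by
    rw [← hq1]; exact J0_ser m hm (q-1) (by omega)
  have e7 : zetaR q = ∑' k : ℕ+, 1 / ((k:ℕ):ℝ)^q := rfl
  -- summabilities
  have S1 := J_col_summable m hm1 q (by omega)
  have S2 := J_col_summable m hm1 (q-1) (by omega)
  have S3 : Summable (fun k : ℕ+ => (1 / ((k:ℕ):ℝ)^q) * Aux ((m:ℝ) + ((k:ℕ):ℝ))) :=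
    (J_col_summable (m-1) hm1' q (by omega)).congr (fun k => by rw [hmm]; ring_nf)
  have S4 : Summable (fun k : ℕ+ => (1 / ((k:ℕ):ℝ)^(q-1)) * Aux ((m:ℝ) + ((k:ℕ):ℝ))) :=
    (J_col_summable (m-1) hm1' (q-1) (by omega)).congr (fun k => by rw [hmm]; ring_nf)
  have S5 := J0_summable m hm q (by omega)
  have S6 := J0_summable m hm (q-1) (by omega)
  have S7 := zeta_summable q hq
  -- key per-k identity summed up
  have hE : ∑' k : ℕ+, (((m:ℝ)+1) * ((1 / ((k:ℕ):ℝ)^q) * Aux ((m:ℝ) + 1 + ((k:ℕ):ℝ)))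
        + ((m:ℝ) * (1 / (((k:ℕ):ℝ)^q * ((m:ℝ) + 1 + ((k:ℕ):ℝ))))
          + (1 / (((k:ℕ):ℝ)^(q-1) * ((m:ℝ) + 1 + ((k:ℕ):ℝ)))
            + (1 / ((k:ℕ):ℝ)^(q-1)) * Aux ((m:ℝ) + 1 + ((k:ℕ):ℝ)))))
      = ∑' k : ℕ+, (1 / ((k:ℕ):ℝ)^q
        + ((m:ℝ) * ((1 / ((k:ℕ):ℝ)^q) * Aux ((m:ℝ) + ((k:ℕ):ℝ)))
          + (1 / ((k:ℕ):ℝ)^(q-1)) * Aux ((m:ℝ) + ((k:ℕ):ℝ)))) := by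
    refine tsum_congr (fun k => ?_)
    set K := ((k:ℕ):ℝ) with hK
    have hK0 : (0:ℝ) < K := pnat_cast_pos k
    have hP0 : (0:ℝ) < K^(q-1) := by positivity
    have hmr : (0:ℝ) ≤ (m:ℝ) := by exact_mod_cast hm
    have hrec := Aux_rec (c := (m:ℝ) + K) (by linarith)
    have harg : (m:ℝ) + K + 1 = (m:ℝ) + 1 + K := by ring
    rw [harg] at hrec
    have hc0 : (0:ℝ) < (m:ℝ) + 1 + K := by linarith
    have key : (((m:ℝ)+1+K) * Aux ((m:ℝ)+1+K) - ((m:ℝ)+K) * Aux ((m:ℝ)+K)) * ((m:ℝ)+1+K) = 1 := by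
      rw [hrec]
      exact one_div_mul_cancel hc0.ne'
    have hKq : K^q = K^(q-1) * K := by
      rw [← pow_succ]
      congr 1
      omega
    rw [hKq]
    set P := K^(q-1) with hPdef
    set A1 := Aux ((m:ℝ)+1+K) with hA1
    set A0 := Aux ((m:ℝ)+K) with hA0
    field_simp
    linear_combination key
  -- split the sums
  rw [Summable.tsum_add (S1.mul_left _) ((S5.mul_left _).add (S6.add S2)),
    Summable.tsum_add (S5.mul_left _) (S6.add S2), Summable.tsum_add S6 S2,
    Summable.tsum_add S7 ((S3.mul_left _).add S4), Summable.tsum_add (S3.mul_left _) S4,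
    tsum_mul_left, tsum_mul_left, tsum_mul_left] at hE
  rw [← e1, ← e2, ← e3, ← e4, ← e5, ← e6, ← e7] at hE
  have hmne : ((m:ℝ) + 1) ≠ 0 := by
    have : (0:ℝ) ≤ (m:ℝ) := by exact_mod_cast hm
    linarith
  field_simp
  linear_combination hE
end

section
/- For all integers r ≥ 1 and q ≥ 2, K(r,0,q) = (-1)^{r+q} (r!/(q-1)!) K(q-1,0,r+1) + (-1)^r r! [ζ(r+1) ζ(q) - ζ(r+q+1)], where K(r,0,q) = ∫₀¹ log^r(x) Li_q(x)/(1-x) dx. -/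
open MeasureTheory

section Stmt15Aux

open Set

/-! Auxiliary material for `stmt15`. -/

lemma expNeg_image' : (fun t : ℝ => Real.exp (-t)) '' Ioi 0 = Ioo 0 1 := by
  ext x
  constructor
  · rintro ⟨t, ht, rfl⟩
    exact ⟨Real.exp_pos _, Real.exp_lt_one_iff.mpr (by simpa using ht)⟩
  · rintro ⟨hx0, hx1⟩
    exact ⟨-Real.log x, by simpa using Real.log_neg hx0 hx1, by simp [Real.exp_log hx0]⟩

lemma expNeg_deriv' : ∀ t ∈ Ioi (0:ℝ), HasDerivWithinAt (fun t : ℝ => Real.exp (-t))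
    (-Real.exp (-t)) (Ioi 0) t := by
  intro t _
  have h := ((Real.hasDerivAt_exp (-t)).comp t (hasDerivAt_neg t)).hasDerivWithinAt (s := Ioi 0)
  simp only [mul_neg, mul_one] at h
  exact h

lemma expNeg_inj' : InjOn (fun t : ℝ => Real.exp (-t)) (Ioi 0) :=
  (Real.exp_injective.comp neg_injective).injOn

lemma momAux' (m a : ℕ) (t : ℝ) :
    |(-Real.exp (-t))| • (Real.log (Real.exp (-t)) ^ a * Real.exp (-t) ^ m)
      = (-1 : ℝ) ^ a * (t ^ a * Real.exp (-(((m:ℝ)+1) * t))) := by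
  rw [abs_neg, abs_of_pos (Real.exp_pos _), Real.log_exp, ← Real.exp_nat_mul, smul_eq_mul,
    neg_pow, show (-(((m:ℝ)+1)*t)) = -t + (m:ℝ) * -t from by ring, Real.exp_add]
  ring

lemma momInt' (m a : ℕ) :
    IntegrableOn (fun x : ℝ => Real.log x ^ a * x ^ m) (Ioo 0 1) := by
  rw [← expNeg_image',
    integrableOn_image_iff_integrableOn_abs_deriv_smul measurableSet_Ioi expNeg_deriv' expNeg_inj']
  have base : IntegrableOn (fun t : ℝ => t ^ (a:ℝ) * Real.exp (-(((m:ℝ)+1)) * t ^ (1:ℝ))) (Ioi 0) :=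
    integrableOn_rpow_mul_exp_neg_mul_rpow (neg_one_lt_zero.trans_le (Nat.cast_nonneg a)) zero_lt_one
      (by positivity)
  have : IntegrableOn (fun t : ℝ => (-1:ℝ)^a * (t ^ a * Real.exp (-(((m:ℝ)+1) * t)))) (Ioi 0) := by
    apply IntegrableOn.congr_fun (base.const_mul ((-1:ℝ)^a)) _ measurableSet_Ioi
    intro t ht
    simp only [Real.rpow_one, Real.rpow_natCast]
    ring
  exact this.congr_fun (fun t ht => (momAux' m a t).symm) measurableSet_Ioi

lemma momEq' (m a : ℕ) :
    ∫ x in Ioo (0:ℝ) 1, Real.log x ^ a * x ^ m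
      = (-1 : ℝ) ^ a * a.factorial / ((m:ℝ) + 1) ^ (a + 1) := by
  rw [← expNeg_image',
    integral_image_eq_integral_abs_deriv_smul measurableSet_Ioi expNeg_deriv' expNeg_inj']
  simp_rw [momAux']
  rw [MeasureTheory.integral_const_mul]
  have key : ∫ t in Ioi (0:ℝ), t ^ (((a:ℝ)+1) - 1) * Real.exp (-(((m:ℝ)+1) * t))
      = (1 / ((m:ℝ)+1)) ^ ((a:ℝ)+1) * Real.Gamma ((a:ℝ)+1) :=
    Real.integral_rpow_mul_exp_neg_mul_Ioi (by positivity) (by positivity)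
  have h1 : ∫ t in Ioi (0:ℝ), t ^ a * Real.exp (-(((m:ℝ)+1) * t))
      = (1 / ((m:ℝ)+1)) ^ ((a:ℝ)+1) * Real.Gamma ((a:ℝ)+1) := by
    rw [← key]
    refine setIntegral_congr_fun measurableSet_Ioi (fun t ht => ?_)
    rw [add_sub_cancel_right, Real.rpow_natCast]
  rw [h1]
  have h2 : Real.Gamma ((a:ℝ)+1) = a.factorial := Real.Gamma_nat_eq_factorial a
  have h3 : (1 / ((m:ℝ)+1)) ^ ((a:ℝ)+1) = (1 / ((m:ℝ)+1)) ^ (a+1) := by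
    rw [← Real.rpow_natCast (1 / ((m:ℝ)+1)) (a+1)]
    push_cast
    ring_nf
  rw [h2, h3, div_pow, one_pow]
  ring

noncomputable def Saux (a b : ℕ) : ℝ :=
  ∑' p : ℕ+ × ℕ, (1 / (((p.1 : ℕ) : ℝ)) ^ b) * (1 / (((p.1 : ℕ) : ℝ) + p.2 + 1) ^ (a + 1))

lemma summable_pnat_pow' {p : ℕ} (hp : 2 ≤ p) :
    Summable (fun k : ℕ+ => 1 / (((k : ℕ) : ℝ)) ^ p) := by
  have h : Summable (fun n : ℕ => 1 / (n : ℝ) ^ p) :=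
    Real.summable_one_div_nat_pow.mpr (by omega)
  exact h.comp_injective PNat.coe_injective

lemma summable_shift_pow' {p : ℕ} (hp : 2 ≤ p) :
    Summable (fun j : ℕ => 1 / ((j : ℝ) + 1) ^ p) := by
  have h : Summable (fun n : ℕ => 1 / (n : ℝ) ^ p) :=
    Real.summable_one_div_nat_pow.mpr (by omega)
  have := (summable_nat_add_iff 1).mpr h
  refine this.congr fun j => ?_
  push_cast
  ring_nf

lemma summable_Saux' (a b : ℕ) (ha : 1 ≤ a) (hb : 2 ≤ b) :
    Summable (fun p : ℕ+ × ℕ =>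
      (1 / (((p.1 : ℕ) : ℝ)) ^ b) * (1 / (((p.1 : ℕ) : ℝ) + p.2 + 1) ^ (a + 1))) := by
  have hbnd := (summable_pnat_pow' hb).mul_of_nonneg (summable_shift_pow' (p := a + 1) (by omega))
    (fun k => by positivity) (fun j => by positivity)
  refine Summable.of_nonneg_of_le (fun p => by positivity) (fun p => ?_) hbnd
  have h1 : (0:ℝ) < ((p.1 : ℕ) : ℝ) := by exact_mod_cast p.1.pos
  apply mul_le_mul_of_nonneg_left _ (by positivity)
  exact one_div_le_one_div_of_le (by positivity)
    (pow_le_pow_left₀ (by positivity) (by linarith) _)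

lemma pointwise_expand' (a b : ℕ) {x : ℝ} (hx : x ∈ Ioo (0:ℝ) 1) :
    Real.log x ^ a * Li b x / (1 - x)
      = ∑' p : ℕ+ × ℕ, (1 / (((p.1 : ℕ) : ℝ)) ^ b) * (Real.log x ^ a * x ^ ((p.1 : ℕ) + p.2)) := by
  obtain ⟨hx0, hx1⟩ := hx
  have hgsum : Summable (fun p : ℕ+ × ℕ => (1 / (((p.1 : ℕ) : ℝ)) ^ b) * x ^ ((p.1 : ℕ) + p.2)) := by
    have h1 : Summable (fun k : ℕ+ => x ^ (k : ℕ)) :=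
      (summable_geometric_of_lt_one hx0.le hx1).comp_injective PNat.coe_injective
    have hb' := h1.mul_of_nonneg (summable_geometric_of_lt_one hx0.le hx1)
      (fun k => by positivity) (fun j => by positivity)
    refine Summable.of_nonneg_of_le (fun p => by positivity) (fun p => ?_) hb'
    have hk1 : (1:ℝ) ≤ (((p.1 : ℕ) : ℝ)) ^ b :=
      one_le_pow₀ (by exact_mod_cast p.1.one_le)
    calc (1 / (((p.1 : ℕ) : ℝ)) ^ b) * x ^ ((p.1 : ℕ) + p.2)
        ≤ 1 * x ^ ((p.1 : ℕ) + p.2) := by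
          apply mul_le_mul_of_nonneg_right _ (by positivity)
          exact div_le_one_of_le₀ hk1 (by positivity)
      _ = x ^ (p.1 : ℕ) * x ^ p.2 := by rw [one_mul, pow_add]
  have hrow : ∀ k : ℕ+, Summable (fun j : ℕ => (1 / (((k : ℕ) : ℝ)) ^ b) * x ^ ((k : ℕ) + j)) := by
    intro k
    simp_rw [pow_add]
    exact ((summable_geometric_of_lt_one hx0.le hx1).mul_left
      (1 / (((k : ℕ) : ℝ)) ^ b * x ^ (k : ℕ))).congr (fun j => by ring)
  have hcore : ∑' p : ℕ+ × ℕ, (1 / (((p.1 : ℕ) : ℝ)) ^ b) * x ^ ((p.1 : ℕ) + p.2)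
      = Li b x * (1 - x)⁻¹ := by
    rw [Summable.tsum_prod' hgsum hrow]
    have hinner : ∀ k : ℕ+, ∑' j : ℕ, (1 / (((k : ℕ) : ℝ)) ^ b) * x ^ ((k : ℕ) + j)
        = (x ^ (k:ℕ) / (((k : ℕ) : ℝ)) ^ b) * (1 - x)⁻¹ := by
      intro k
      simp_rw [pow_add, show ∀ j:ℕ, 1 / (((k : ℕ) : ℝ)) ^ b * (x ^ (k:ℕ) * x ^ j)
          = (x ^ (k:ℕ) / (((k : ℕ) : ℝ)) ^ b) * x ^ j from fun j => by ring]
      rw [tsum_mul_left, tsum_geometric_of_lt_one hx0.le hx1]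
    simp_rw [hinner]
    rw [tsum_mul_right]
    simp only [Li, zpow_natCast]
  have : ∑' p : ℕ+ × ℕ, (1 / (((p.1 : ℕ) : ℝ)) ^ b) * (Real.log x ^ a * x ^ ((p.1 : ℕ) + p.2))
      = Real.log x ^ a * (Li b x * (1 - x)⁻¹) := by
    rw [← hcore, ← tsum_mul_left]
    exact tsum_congr fun p => by ring
  rw [this, div_eq_mul_inv]
  ring

lemma lemmaA' (a b : ℕ) (ha : 1 ≤ a) (hb : 2 ≤ b) :
    ∫ x in (0:ℝ)..1, Real.log x ^ a * Li b x / (1 - x)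
      = (-1 : ℝ) ^ a * a.factorial * Saux a b := by
  rw [intervalIntegral.integral_of_le zero_le_one, integral_Ioc_eq_integral_Ioo]
  rw [setIntegral_congr_fun measurableSet_Ioo (fun x hx => pointwise_expand' a b hx)]
  have hmeas : ∀ p : ℕ+ × ℕ, AEStronglyMeasurable
      (fun x : ℝ => (1 / (((p.1 : ℕ) : ℝ)) ^ b) * (Real.log x ^ a * x ^ ((p.1 : ℕ) + p.2)))
      (volume.restrict (Ioo 0 1)) := by
    intro p
    exact (((Real.measurable_log.pow_const a).mul (measurable_id.pow_const _)).const_mul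
      _).aestronglyMeasurable
  have hint : ∀ p : ℕ+ × ℕ, Integrable
      (fun x : ℝ => (1 / (((p.1 : ℕ) : ℝ)) ^ b) * (Real.log x ^ a * x ^ ((p.1 : ℕ) + p.2)))
      (volume.restrict (Ioo 0 1)) := fun p => (momInt' _ a).const_mul _
  have habs : ∀ p : ℕ+ × ℕ, ∫ x in Ioo (0:ℝ) 1,
      ‖(1 / (((p.1 : ℕ) : ℝ)) ^ b) * (Real.log x ^ a * x ^ ((p.1 : ℕ) + p.2))‖
      = (a.factorial : ℝ) * ((1 / (((p.1 : ℕ) : ℝ)) ^ b)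
          * (1 / (((p.1 : ℕ) : ℝ) + p.2 + 1) ^ (a + 1))) := by
    intro p
    have hnorm : ∀ x ∈ Ioo (0:ℝ) 1,
        ‖(1 / (((p.1 : ℕ) : ℝ)) ^ b) * (Real.log x ^ a * x ^ ((p.1 : ℕ) + p.2))‖
        = (1 / (((p.1 : ℕ) : ℝ)) ^ b) * ((-1:ℝ) ^ a * (Real.log x ^ a * x ^ ((p.1 : ℕ) + p.2))) := by
      intro x hx
      have h1 : (0:ℝ) < ((p.1 : ℕ) : ℝ) := by exact_mod_cast p.1.pos
      have hlog : Real.log x < 0 := Real.log_neg hx.1 hx.2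
      have hxpos : (0:ℝ) < x ^ ((p.1 : ℕ) + p.2) := pow_pos hx.1 _
      have hkpos : (0:ℝ) < 1 / (((p.1 : ℕ) : ℝ)) ^ b := by positivity
      rw [Real.norm_eq_abs, abs_mul, abs_of_pos hkpos, abs_mul, abs_of_pos hxpos, abs_pow,
        abs_of_neg hlog, neg_pow]
      ring
    rw [setIntegral_congr_fun measurableSet_Ioo hnorm, integral_const_mul, integral_const_mul,
      momEq']
    have h1 : (0:ℝ) < ((p.1 : ℕ) : ℝ) := by exact_mod_cast p.1.pos
    have hcast : (((p.1 : ℕ) + p.2 : ℕ) : ℝ) + 1 = ((p.1 : ℕ) : ℝ) + p.2 + 1 := by push_cast; ring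
    rw [hcast]
    have hpow : ((-1:ℝ) ^ a) * ((-1:ℝ) ^ a) = 1 := by
      rw [← pow_add, show a + a = 2 * a from by ring, pow_mul, neg_one_sq, one_pow]
    linear_combination (1 / (((p.1 : ℕ) : ℝ)) ^ b * (a.factorial : ℝ)
      / ((((p.1 : ℕ) : ℝ) + p.2 + 1) ^ (a + 1))) * hpow
  have hbnd : ∑' p : ℕ+ × ℕ, ∫⁻ x, ‖(1 / (((p.1 : ℕ) : ℝ)) ^ b)
      * (Real.log x ^ a * x ^ ((p.1 : ℕ) + p.2))‖₊ ∂(volume.restrict (Ioo 0 1)) ≠ ⊤ := by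
    have heq : ∀ p : ℕ+ × ℕ, ∫⁻ x, ‖(1 / (((p.1 : ℕ) : ℝ)) ^ b)
        * (Real.log x ^ a * x ^ ((p.1 : ℕ) + p.2))‖₊ ∂(volume.restrict (Ioo 0 1))
        = ENNReal.ofReal ((a.factorial : ℝ) * ((1 / (((p.1 : ℕ) : ℝ)) ^ b)
          * (1 / (((p.1 : ℕ) : ℝ) + p.2 + 1) ^ (a + 1)))) := by
      intro p
      rw [← habs p]
      exact (ofReal_integral_norm_eq_lintegral_enorm (hint p)).symm
    simp_rw [heq]
    rw [← ENNReal.ofReal_tsum_of_nonneg (fun p => by positivity)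
      (((summable_Saux' a b ha hb).mul_left _))]
    exact ENNReal.ofReal_ne_top
  rw [integral_tsum hmeas hbnd]
  have hterm : ∀ p : ℕ+ × ℕ, ∫ x in Ioo (0:ℝ) 1,
      (1 / (((p.1 : ℕ) : ℝ)) ^ b) * (Real.log x ^ a * x ^ ((p.1 : ℕ) + p.2))
      = ((-1:ℝ) ^ a * a.factorial) * ((1 / (((p.1 : ℕ) : ℝ)) ^ b)
          * (1 / (((p.1 : ℕ) : ℝ) + p.2 + 1) ^ (a + 1))) := by
    intro p
    rw [integral_const_mul, momEq']
    have hcast : (((p.1 : ℕ) + p.2 : ℕ) : ℝ) + 1 = ((p.1 : ℕ) : ℝ) + p.2 + 1 := by push_cast; ring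
    rw [hcast]
    ring
  simp_rw [hterm]
  rw [tsum_mul_left]
  rfl

set_option maxHeartbeats 1000000 in
lemma lemmaB' (r q : ℕ) (hr : 1 ≤ r) (hq : 2 ≤ q) :
    zetaR q * zetaR (r + 1)
      = Saux r q + Saux (q - 1) (r + 1) + zetaR (r + q + 1) := by
  classical
  set F : ℕ+ × ℕ+ → ℝ := fun p => (1 / (((p.1 : ℕ) : ℝ)) ^ q) * (1 / (((p.2 : ℕ) : ℝ)) ^ (r + 1))
    with hFdef
  have hFnonneg : ∀ p, 0 ≤ F p := fun p => by positivity
  have hF : Summable F :=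
    (summable_pnat_pow' hq).mul_of_nonneg (summable_pnat_pow' (by omega))
      (fun k => by positivity) (fun m => by positivity)
  have htot : ∑' p, F p = zetaR q * zetaR (r + 1) := by
    have hrow : ∀ k : ℕ+, Summable (fun m : ℕ+ =>
        (1 / (((k : ℕ) : ℝ)) ^ q) * (1 / (((m : ℕ) : ℝ)) ^ (r + 1))) :=
      fun k => (summable_pnat_pow' (by omega)).mul_left _
    rw [hFdef, Summable.tsum_prod' hF hrow, zetaR, zetaR, ← tsum_mul_right]
    exact tsum_congr fun k => by exact tsum_mul_left (a := 1 / (((k:ℕ):ℝ)) ^ q)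
  set F₁ : ℕ+ × ℕ+ → ℝ := fun p => if p.1 < p.2 then F p else 0 with hF1def
  set F₂ : ℕ+ × ℕ+ → ℝ := fun p => if p.2 < p.1 then F p else 0 with hF2def
  set F₃ : ℕ+ × ℕ+ → ℝ := fun p => if p.1 = p.2 then F p else 0 with hF3def
  have hsplit : ∀ p, F p = F₁ p + F₂ p + F₃ p := by
    intro p
    rcases lt_trichotomy p.1 p.2 with h | h | h
    · simp [hF1def, hF2def, hF3def, h, asymm h, ne_of_lt h]
    · simp [hF1def, hF2def, hF3def, h, lt_irrefl]
    · simp [hF1def, hF2def, hF3def, h, asymm h, (ne_of_lt h).symm]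
  have hS1 : Summable F₁ := hF.of_nonneg_of_le (fun p => by positivity)
    (fun p => by by_cases h : p.1 < p.2 <;> simp [hF1def, h, hFnonneg p])
  have hS2 : Summable F₂ := hF.of_nonneg_of_le (fun p => by positivity)
    (fun p => by by_cases h : p.2 < p.1 <;> simp [hF2def, h, hFnonneg p])
  have hS3 : Summable F₃ := hF.of_nonneg_of_le (fun p => by positivity)
    (fun p => by by_cases h : p.1 = p.2 <;> simp [hF3def, h, hFnonneg p])
  have hsum : ∑' p, F p = ∑' p, F₁ p + ∑' p, F₂ p + ∑' p, F₃ p := by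
    rw [← Summable.tsum_add hS1 hS2, ← Summable.tsum_add (hS1.add hS2) hS3]
    exact tsum_congr hsplit
  have hg1inj : Function.Injective (fun c : ℕ+ × ℕ => (c.1, c.1 + c.2.succPNat)) := by
    intro c c' h
    simp only [Prod.mk.injEq] at h
    obtain ⟨h1, h2⟩ := h
    have h2' := congrArg PNat.val h2
    simp only [PNat.add_coe, Nat.succPNat_coe, h1] at h2'
    exact Prod.ext h1 (by omega)
  have hg2inj : Function.Injective (fun c : ℕ+ × ℕ => (c.1 + c.2.succPNat, c.1)) := by
    intro c c' h
    simp only [Prod.mk.injEq] at h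
    obtain ⟨h2, h1⟩ := h
    have h2' := congrArg PNat.val h2
    simp only [PNat.add_coe, Nat.succPNat_coe, h1] at h2'
    exact Prod.ext h1 (by omega)
  have hrange1 : Function.support F₁ ⊆ Set.range (fun c : ℕ+ × ℕ => (c.1, c.1 + c.2.succPNat)) := by
    intro p hp
    have hlt : p.1 < p.2 := by
      by_contra h
      simp [hF1def, h] at hp
    have hltn : (p.1 : ℕ) < (p.2 : ℕ) := hlt
    refine ⟨(p.1, (p.2 : ℕ) - (p.1 : ℕ) - 1), Prod.ext rfl (PNat.coe_injective ?_)⟩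
    simp only [PNat.add_coe, Nat.succPNat_coe]
    omega
  have hrange2 : Function.support F₂ ⊆ Set.range (fun c : ℕ+ × ℕ => (c.1 + c.2.succPNat, c.1)) := by
    intro p hp
    have hlt : p.2 < p.1 := by
      by_contra h
      simp [hF2def, h] at hp
    have hltn : (p.2 : ℕ) < (p.1 : ℕ) := hlt
    refine ⟨(p.2, (p.1 : ℕ) - (p.2 : ℕ) - 1), Prod.ext (PNat.coe_injective ?_) rfl⟩
    simp only [PNat.add_coe, Nat.succPNat_coe]
    omega
  have hrange3 : Function.support F₃ ⊆ Set.range (fun k : ℕ+ => ((k, k) : ℕ+ × ℕ+)) := by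
    intro p hp
    have heq : p.1 = p.2 := by
      by_contra h
      simp [hF3def, h] at hp
    exact ⟨p.1, Prod.ext rfl heq⟩
  have hT1 : ∑' p, F₁ p = Saux r q := by
    rw [← hg1inj.tsum_eq hrange1, Saux]
    refine tsum_congr fun c => ?_
    have hlt : c.1 < c.1 + c.2.succPNat := lt_add_of_pos_right _ c.2.succPNat.pos
    simp only [hF1def, hF2def, hFdef, if_pos hlt]
    have : (((c.1 + c.2.succPNat : ℕ+) : ℕ) : ℝ) = ((c.1 : ℕ) : ℝ) + c.2 + 1 := by
      simp only [PNat.add_coe, Nat.succPNat_coe]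
      push_cast
      ring
    rw [this]
  have hT2 : ∑' p, F₂ p = Saux (q - 1) (r + 1) := by
    rw [← hg2inj.tsum_eq hrange2, Saux]
    refine tsum_congr fun c => ?_
    have hlt : c.1 < c.1 + c.2.succPNat := lt_add_of_pos_right _ c.2.succPNat.pos
    simp only [hF2def, hFdef, if_pos hlt]
    have h1 : (((c.1 + c.2.succPNat : ℕ+) : ℕ) : ℝ) = ((c.1 : ℕ) : ℝ) + c.2 + 1 := by
      simp only [PNat.add_coe, Nat.succPNat_coe]
      push_cast
      ring
    have h2 : q - 1 + 1 = q := by omega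
    rw [h1, h2]
    ring
  have hT3 : ∑' p, F₃ p = zetaR (r + q + 1) := by
    have hg3inj : Function.Injective (fun k : ℕ+ => ((k, k) : ℕ+ × ℕ+)) := by
      intro k k' h
      simpa using congrArg Prod.fst h
    rw [← hg3inj.tsum_eq hrange3, zetaR]
    refine tsum_congr fun k => ?_
    simp only [hF3def, hFdef, if_pos rfl]
    rw [div_mul_div_comm, one_mul, ← pow_add]
    congr 2
    omega
  rw [← htot, hsum, hT1, hT2, hT3]

end Stmt15Aux

/-- For integers `r ≥ 1` and `q ≥ 2`, with `K(r,0,q) = ∫₀¹ log^r(x) Li_q(x)/(1-x) dx`,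
`K(r,0,q) = (-1)^(r+q)(r!/(q-1)!) K(q-1,0,r+1) + (-1)^r r! (ζ(r+1)ζ(q) - ζ(r+q+1))`. -/
theorem stmt15 (r q : ℕ) (hr : 1 ≤ r) (hq : 2 ≤ q) :
    (∫ x in (0:ℝ)..1, Real.log x ^ r * Li q x / (1 - x))
      = (-1) ^ (r + q) * ((r.factorial : ℝ) / ((q - 1).factorial : ℝ))
            * (∫ x in (0:ℝ)..1, Real.log x ^ (q - 1) * Li (r + 1) x / (1 - x))
        + (-1) ^ r * (r.factorial : ℝ) * (zetaR (r + 1) * zetaR q - zetaR (r + q + 1)) := by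
  have hA1 := lemmaA' r q hr hq
  have hA2 := lemmaA' (q - 1) (r + 1) (by omega) (by omega)
  have hcastLi : (((r + 1 : ℕ) : ℤ)) = (r : ℤ) + 1 := by push_cast; ring
  rw [hcastLi] at hA2
  rw [hA1, hA2]
  have hB := lemmaB' r q hr hq
  have hfq : (((q - 1).factorial : ℝ)) ≠ 0 := Nat.cast_ne_zero.mpr (Nat.factorial_ne_zero _)
  have hsign : (-1:ℝ) ^ (r + q) * (-1:ℝ) ^ (q - 1) = -((-1:ℝ) ^ r) := by
    rw [← pow_add, show r + q + (q - 1) = (r + 1) + 2 * (q - 1) from by omega, pow_add, pow_mul,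
      neg_one_sq, one_pow, pow_succ]
    ring
  have hzz : zetaR (r + 1) * zetaR q = Saux r q + Saux (q - 1) (r + 1) + zetaR (r + q + 1) := by
    rw [mul_comm]
    exact hB
  rw [hzz]
  have hexp : (-1:ℝ) ^ (r + q) * ((r.factorial : ℝ) / ((q - 1).factorial : ℝ))
      * ((-1:ℝ) ^ (q - 1) * ((q - 1).factorial : ℝ) * Saux (q - 1) (r + 1))
      = -((-1:ℝ) ^ r * (r.factorial : ℝ) * Saux (q - 1) (r + 1)) := by
    have h : (-1:ℝ) ^ (r + q) * ((r.factorial : ℝ) / ((q - 1).factorial : ℝ))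
        * ((-1:ℝ) ^ (q - 1) * ((q - 1).factorial : ℝ) * Saux (q - 1) (r + 1))
        = ((-1:ℝ) ^ (r + q) * (-1:ℝ) ^ (q - 1)) * (r.factorial : ℝ)
          * (((q - 1).factorial : ℝ) / ((q - 1).factorial : ℝ)) * Saux (q - 1) (r + 1) := by
      ring
    rw [h, div_self hfq, hsign]
    ring
  rw [hexp]
  ring
end
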